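/- arXiv:1511.04135 — 8 statements merged into one kernel-verified Lean document; each statement's English description precedes it below -/
import Mathlib

section
/- For I ⊆ J finitary subsets of S, in the Hecke algebra H_q over Z[q] one has x_J = h·x_I where h = Σ_{w : w⁻¹ ∈ D_I ∩ W_J} T_w, D_I being the set of minimal-length right coset representatives of W_I in W. In particular x_J H_q ⊆ x_I H_q. -/
open Polynomial

/-- A realization of the Hecke algebra of the Coxeter system `cs` over a commutative
ring `R` with parameter `qR`. -/
structure HeckeAlgebraData {B W : Type} [Group W] {M : CoxeterMatrix B}
    (cs : CoxeterSystem M W) (R : Type) [CommRing R] (qR : R)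
    (H : Type) [Ring H] [Algebra R H] where
  T : Module.Basis W R H
  T_one : T 1 = 1
  T_mul_of_lt : ∀ (i : B) (w : W), cs.length (cs.simple i * w) < cs.length w →
    T (cs.simple i) * T w = (qR - 1) • T w + qR • T (cs.simple i * w)
  T_mul_of_gt : ∀ (i : B) (w : W), cs.length w < cs.length (cs.simple i * w) →
    T (cs.simple i) * T w = T (cs.simple i * w)


namespace StmtAux

variable {B W : Type} [Group W] {M : CoxeterMatrix B} (cs : CoxeterSystem M W)

local prefix:100 "s" => cs.simple
local prefix:100 "π" => cs.wordProd
local prefix:100 "ℓ" => cs.length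

open Classical in
/-- indicator -/
noncomputable def chi (t x : W) : ZMod 2 := if t = x then 1 else 0

lemma zmod2_add_self (a : ZMod 2) : a + a = 0 := by fin_cases a <;> decide

lemma chi_congr (a b c d : W) (h : (a = b) ↔ (c = d)) : chi a b = chi c d := by
  unfold chi
  congr 1
  · exact propext h

lemma chi_conj (t x u : W) : chi (u * t * u⁻¹) x = chi t (u⁻¹ * x * u) := by
  refine chi_congr _ _ _ _ ⟨fun h => ?_, fun h => ?_⟩
  · rw [← h]; simp [mul_assoc]
  · rw [h]; simp [mul_assoc]

/-- The function underlying the reflection-counting permutation. -/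
noncomputable def ffun (i : B) : W × ZMod 2 → W × ZMod 2 :=
  fun p => (s i * p.1 * s i, p.2 + chi p.1 (s i))

lemma chi_simple_conj (t : W) (i : B) : chi (s i * t * s i) (s i) = chi t (s i) := by
  have h := chi_conj t (s i) (s i)
  rw [cs.inv_simple] at h
  rw [h, cs.simple_mul_simple_self, one_mul]

lemma ffun_invol (i : B) : Function.Involutive (ffun cs i) := by
  intro p
  obtain ⟨t, ε⟩ := p
  simp only [ffun]
  refine Prod.ext ?_ ?_
  · show s i * (s i * t * s i) * s i = t
    simp only [← mul_assoc, cs.simple_mul_simple_cancel_left]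
    exact cs.simple_mul_simple_cancel_right i
  · show ε + chi t (s i) + chi (s i * t * s i) (s i) = ε
    rw [chi_simple_conj cs t i, add_assoc, zmod2_add_self, add_zero]

/-- The permutation of `W × ZMod 2` associated to a simple reflection. -/
noncomputable def fperm (i : B) : Equiv.Perm (W × ZMod 2) := (ffun_invol cs i).toPerm

@[simp] lemma fperm_apply (i : B) (p : W × ZMod 2) :
    fperm cs i p = (s i * p.1 * s i, p.2 + chi p.1 (s i)) := rfl

lemma simple_mul_pow (i j : B) (n : ℕ) :
    s j * (s i * s j) ^ n = ((s i * s j)⁻¹) ^ n * s j := by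
  induction n with
  | zero => simp
  | succ n ih =>
    have hjp : s j * (s i * s j) = (s i * s j)⁻¹ * s j := by
      rw [mul_inv_rev, cs.inv_simple, cs.inv_simple, mul_assoc]
    rw [pow_succ, ← mul_assoc, ih, mul_assoc, hjp, ← mul_assoc, ← pow_succ]

lemma fperm_pow_apply (i j : B) (k : ℕ) (t : W) (ε : ZMod 2) :
    ((fperm cs i * fperm cs j) ^ k) (t, ε) =
      ((s i * s j) ^ k * t * ((s i * s j) ^ k)⁻¹,
        ε + ∑ n ∈ Finset.range (2 * k), chi t (((s i * s j)⁻¹) ^ n * s j)) := by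
  induction k with
  | zero => simp
  | succ k ih =>
    rw [pow_succ', Equiv.Perm.mul_apply, ih]
    set p : W := s i * s j with hp
    have hsj : s j * p ^ k = (p⁻¹) ^ k * s j := simple_mul_pow cs i j k
    have hconj1 : ∀ x : W, chi (p ^ k * t * (p ^ k)⁻¹) x = chi t ((p⁻¹) ^ k * x * p ^ k) := by
      intro x
      rw [chi_conj, ← inv_pow]
    have harg1 : (p⁻¹) ^ k * (s j) * p ^ k = (p⁻¹) ^ (2 * k) * s j := by
      rw [mul_assoc, hsj, ← mul_assoc, ← pow_add, two_mul]
    have harg2 : (p⁻¹) ^ k * (p⁻¹ * s j) * p ^ k = (p⁻¹) ^ (2 * k + 1) * s j := by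
      rw [mul_assoc, mul_assoc, hsj, ← mul_assoc, ← mul_assoc, ← pow_succ, ← pow_add]
      congr 2
      omega
    have hsjsisj : s j * s i * s j = p⁻¹ * s j := by
      rw [hp, mul_inv_rev, cs.inv_simple, cs.inv_simple, mul_assoc]
    rw [Equiv.Perm.mul_apply]
    simp only [fperm_apply]
    refine Prod.ext ?_ ?_
    · show s i * (s j * (p ^ k * t * (p ^ k)⁻¹) * s j) * s i = p ^ (k+1) * t * (p ^ (k+1))⁻¹
      rw [hp]
      simp only [pow_succ', mul_inv_rev, cs.inv_simple, mul_assoc]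
    · show ε + (∑ n ∈ Finset.range (2 * k), chi t ((p⁻¹) ^ n * s j))
          + chi (p ^ k * t * (p ^ k)⁻¹) (s j)
          + chi (s j * (p ^ k * t * (p ^ k)⁻¹) * s j) (s i)
        = ε + ∑ n ∈ Finset.range (2 * (k+1)), chi t ((p⁻¹) ^ n * s j)
      have h1 : chi (p ^ k * t * (p ^ k)⁻¹) (s j) = chi t ((p⁻¹) ^ (2*k) * s j) := by
        rw [hconj1, harg1]
      have h2 : chi (s j * (p ^ k * t * (p ^ k)⁻¹) * s j) (s i)
          = chi t ((p⁻¹) ^ (2*k+1) * s j) := by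
        have hc : chi (s j * (p ^ k * t * (p ^ k)⁻¹) * s j) (s i)
            = chi (p ^ k * t * (p ^ k)⁻¹) (s j * s i * s j) := by
          have := chi_conj (p ^ k * t * (p ^ k)⁻¹) (s i) (s j)
          rw [cs.inv_simple] at this
          rw [this]
        rw [hc, hsjsisj, hconj1, harg2]
      rw [h1, h2]
      have h3 : 2 * (k + 1) = (2*k) + 1 + 1 := by omega
      rw [h3, Finset.sum_range_succ, Finset.sum_range_succ]
      ring

lemma fperm_liftable : CoxeterMatrix.IsLiftable M (fperm cs) := by
  intro i j
  ext ⟨t, ε⟩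
  · rw [fperm_pow_apply, cs.simple_mul_simple_pow]
    simp
  · rw [fperm_pow_apply]
    show (ε + _ : ZMod 2) = ε
    have h2 : ∑ n ∈ Finset.range (2 * M i j), chi t (((s i * s j)⁻¹) ^ n * s j) = 0 := by
      have h2m : 2 * M.M i j = M.M i j + M.M i j := by omega
      rw [h2m, Finset.sum_range_add]
      have heq : ∀ n, chi t (((s i * s j)⁻¹) ^ (M.M i j + n) * s j)
          = chi t (((s i * s j)⁻¹) ^ n * s j) := by
        intro n
        congr 2
        rw [pow_add, inv_pow, cs.simple_mul_simple_pow, inv_one, one_mul]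
      simp only [heq]
      rw [← Finset.sum_add_distrib]
      simp only [zmod2_add_self]
      exact Finset.sum_const_zero
    rw [h2, add_zero]

/-- The reflection-counting representation. -/
noncomputable def Phi : W →* Equiv.Perm (W × ZMod 2) := cs.lift ⟨fperm cs, fperm_liftable cs⟩

lemma Phi_simple (i : B) : Phi cs (s i) = fperm cs i := cs.lift_apply_simple (fperm_liftable cs) i

lemma Phi_wordProd (ω : List B) (t : W) (ε : ZMod 2) :
    Phi cs (π ω) (t, ε) =
      (π ω * t * (π ω)⁻¹, ε + ((cs.rightInvSeq ω).map (chi t)).sum) := by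
  induction ω with
  | nil => simp
  | cons i ω ih =>
    rw [cs.wordProd_cons, map_mul, Equiv.Perm.mul_apply, ih, Phi_simple]
    simp only [fperm_apply]
    refine Prod.ext ?_ ?_
    · show s i * (π ω * t * (π ω)⁻¹) * s i = s i * π ω * t * (s i * π ω)⁻¹
      rw [mul_inv_rev, cs.inv_simple]
      simp only [mul_assoc]
    · show ε + ((cs.rightInvSeq ω).map (chi t)).sum + chi (π ω * t * (π ω)⁻¹) (s i)
        = ε + ((cs.rightInvSeq (i :: ω)).map (chi t)).sum
      have hris : cs.rightInvSeq (i :: ω) = ((π ω)⁻¹ * (s i) * (π ω)) :: cs.rightInvSeq ω := rfl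
      rw [hris, chi_conj]
      simp only [List.map_cons, List.sum_cons]
      ring

lemma sum_chi_eq_of_wordProd_eq {ω ω' : List B} (h : π ω = π ω') (t : W) :
    ((cs.rightInvSeq ω).map (chi t)).sum = ((cs.rightInvSeq ω').map (chi t)).sum := by
  have h1 := Phi_wordProd cs ω t 0
  have h2 := Phi_wordProd cs ω' t 0
  rw [h] at h1
  rw [h1] at h2
  have := congrArg Prod.snd h2
  simpa using this

open Classical in
lemma sum_chi_nodup {t : W} {l : List W} (h : l.Nodup) :
    (l.map (chi t)).sum = if t ∈ l then 1 else 0 := by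
  induction l with
  | nil => simp
  | cons x l ih =>
    rw [List.nodup_cons] at h
    simp only [List.map_cons, List.sum_cons, ih h.2, List.mem_cons]
    by_cases hx : t = x
    · subst hx
      have hchi : chi t t = 1 := by unfold chi; exact if_pos rfl
      rw [hchi, if_neg h.1, if_pos (Or.inl rfl), add_zero]
    · have : chi t x = 0 := by unfold chi; rw [if_neg hx]
      rw [this, zero_add]
      by_cases hm : t ∈ l
      · rw [if_pos hm, if_pos (Or.inr hm)]
      · rw [if_neg hm, if_neg (by tauto)]

lemma mem_rightInvSeq_of_descent {ω : List B} (hω : cs.IsReduced ω) {i : B}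
    (h : ℓ (π ω * s i) < ℓ (π ω)) : s i ∈ cs.rightInvSeq ω := by
  classical
  obtain ⟨ω', hlen, hprod⟩ := cs.exists_reduced_word (π ω * s i)
  have hprod2 : π (ω' ++ [i]) = π ω := by
    rw [cs.wordProd_append, ← hprod, cs.wordProd_singleton,
      cs.simple_mul_simple_cancel_right]
  have hred : cs.IsReduced (ω' ++ [i]) := by
    unfold CoxeterSystem.IsReduced
    rw [hprod2]
    have h1 : (ω' ++ [i]).length = ℓ (π ω * s i) + 1 := by
      simp [hprod, hlen.eq]
    have h2 : ℓ (π ω) ≤ (ω' ++ [i]).length := by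
      rw [← hprod2]; exact cs.length_wordProd_le _
    omega
  have hmem : s i ∈ cs.rightInvSeq (ω' ++ [i]) := by
    rw [← List.concat_eq_append, cs.rightInvSeq_concat]
    simp
  have hsum := sum_chi_eq_of_wordProd_eq cs hprod2.symm (s i)
  rw [sum_chi_nodup (CoxeterSystem.IsReduced.nodup_rightInvSeq cs hω),
      sum_chi_nodup (CoxeterSystem.IsReduced.nodup_rightInvSeq cs hred)] at hsum
  by_contra hnot
  rw [if_neg hnot, if_pos hmem] at hsum
  exact absurd hsum (by decide)

lemma mem_leftInvSeq_of_descent {ω : List B} (hω : cs.IsReduced ω) {i : B}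
    (h : ℓ (s i * π ω) < ℓ (π ω)) : s i ∈ cs.leftInvSeq ω := by
  have hrev : cs.IsReduced ω.reverse := (cs.isReduced_reverse_iff ω).mpr hω
  have hlen : ℓ (π ω.reverse * s i) < ℓ (π ω.reverse) := by
    rw [cs.wordProd_reverse]
    have h1 : (π ω)⁻¹ * s i = (s i * π ω)⁻¹ := by
      rw [mul_inv_rev, cs.inv_simple]
    rw [h1, cs.length_inv, cs.length_inv]
    exact h
  have := mem_rightInvSeq_of_descent cs hrev hlen
  rw [cs.rightInvSeq_reverse, List.mem_reverse] at this
  exact this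

/-- Left exchange property. -/
lemma left_exchange {ω : List B} (hω : cs.IsReduced ω) {i : B}
    (h : ℓ (s i * π ω) < ℓ (π ω)) :
    ∃ j < ω.length, s i * π ω = π (ω.eraseIdx j) := by
  have hmem := mem_leftInvSeq_of_descent cs hω h
  obtain ⟨j, hj, hget⟩ := List.mem_iff_getElem.mp hmem
  rw [cs.length_leftInvSeq] at hj
  refine ⟨j, hj, ?_⟩
  rw [← cs.getD_leftInvSeq_mul_wordProd ω j]
  congr 1
  rw [List.getD_eq_getElem _ 1 (by rw [cs.length_leftInvSeq]; exact hj)]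
  exact hget.symm

/-- Right exchange property. -/
lemma right_exchange {ω : List B} (hω : cs.IsReduced ω) {i : B}
    (h : ℓ (π ω * s i) < ℓ (π ω)) :
    ∃ j < ω.length, π ω * s i = π (ω.eraseIdx j) := by
  have hmem := mem_rightInvSeq_of_descent cs hω h
  obtain ⟨j, hj, hget⟩ := List.mem_iff_getElem.mp hmem
  rw [cs.length_rightInvSeq] at hj
  refine ⟨j, hj, ?_⟩
  rw [← cs.wordProd_mul_getD_rightInvSeq ω j]
  congr 1
  rw [List.getD_eq_getElem _ 1 (by rw [cs.length_rightInvSeq]; exact hj)]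
  exact hget.symm

/-- Deletion condition: a non-reduced word can be shortened while keeping its letters. -/
lemma deletion {ω : List B} (hω : ¬ cs.IsReduced ω) :
    ∃ ω' : List B, π ω' = π ω ∧ ω'.length < ω.length ∧ ∀ x ∈ ω', x ∈ ω := by
  classical
  have hne : ω ≠ [] := by
    rintro rfl
    exact hω (by simp [CoxeterSystem.IsReduced])
  have hpos : 0 < ω.length := List.length_pos_iff.mpr hne
  have hex : ∃ k, ¬ cs.IsReduced (ω.take (k+1)) := by
    refine ⟨ω.length - 1, ?_⟩
    have h1 : ω.length - 1 + 1 = ω.length := by omega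
    rwa [h1, List.take_length]
  set k := Nat.find hex with hkdef
  have hk : ¬ cs.IsReduced (ω.take (k+1)) := Nat.find_spec hex
  have hredk : cs.IsReduced (ω.take k) := by
    cases hkk : k with
    | zero => simp [CoxeterSystem.IsReduced]
    | succ m =>
      have := Nat.find_min hex (m := m) (by omega)
      rwa [not_not] at this
  have hklen : k < ω.length := by
    have h1 : k ≤ ω.length - 1 := Nat.find_le (by
      have h1 : ω.length - 1 + 1 = ω.length := by omega
      rwa [h1, List.take_length])
    omega
  have htake : ω.take (k+1) = ω.take k ++ [ω[k]] := by
    rw [List.take_succ, List.getElem?_eq_getElem hklen]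
    rfl
  have htlen : (ω.take k).length = k := by
    rw [List.length_take]
    omega
  have hw1len : ℓ (π (ω.take k)) = k := by
    rw [hredk, htlen]
  have hlt : ℓ (π (ω.take k) * s ω[k]) < ℓ (π (ω.take k)) := by
    have hne2 : ℓ (π (ω.take (k+1))) ≠ (ω.take (k+1)).length := hk
    have hlen1 : (ω.take (k+1)).length = k + 1 := by
      rw [List.length_take]
      omega
    have hprod : π (ω.take (k+1)) = π (ω.take k) * s ω[k] := by
      rw [htake, cs.wordProd_append, cs.wordProd_singleton]
    rcases cs.length_mul_simple (π (ω.take k)) ω[k] with h | h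
    · exfalso
      apply hne2
      rw [hprod, h, hw1len, hlen1]
    · omega
  obtain ⟨j, hj, hje⟩ := right_exchange cs hredk hlt
  refine ⟨(ω.take k).eraseIdx j ++ ω.drop (k+1), ?_, ?_, ?_⟩
  · rw [cs.wordProd_append, ← hje]
    calc π (ω.take k) * s ω[k] * π (ω.drop (k+1))
        = π (ω.take (k+1)) * π (ω.drop (k+1)) := by
          rw [htake, cs.wordProd_append, cs.wordProd_singleton]
      _ = π (ω.take (k+1) ++ ω.drop (k+1)) := (cs.wordProd_append _ _).symm
      _ = π ω := by rw [List.take_append_drop]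
  · rw [List.length_append]
    have h1 : ((ω.take k).eraseIdx j).length + 1 = (ω.take k).length :=
      List.length_eraseIdx_add_one (by omega)
    have h2 : (ω.drop (k+1)).length = ω.length - (k+1) := List.length_drop
    omega
  · intro x hx
    rcases List.mem_append.mp hx with h | h
    · exact ((List.eraseIdx_sublist _ j).trans (List.take_sublist _ _)).subset h
    · exact (List.drop_sublist _ _).subset h

lemma reduce_word : ∀ (n : ℕ) (ω : List B), ω.length ≤ n →
    ∃ ω' : List B, cs.IsReduced ω' ∧ π ω' = π ω ∧ ∀ x ∈ ω', x ∈ ω := by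
  intro n
  induction n with
  | zero =>
    intro ω h
    have : ω = [] := List.eq_nil_of_length_eq_zero (by omega)
    subst this
    exact ⟨[], by simp [CoxeterSystem.IsReduced], rfl, by simp⟩
  | succ n ih =>
    intro ω h
    by_cases hred : cs.IsReduced ω
    · exact ⟨ω, hred, rfl, fun _ hx => hx⟩
    · obtain ⟨ω₁, hprod, hlen, hsub⟩ := deletion cs hred
      obtain ⟨ω', h1, h2, h3⟩ := ih ω₁ (by omega)
      exact ⟨ω', h1, by rw [h2, hprod], fun x hx => hsub _ (h3 x hx)⟩

lemma wordProd_mem (S : Set B) (ω : List B) (hω : ∀ x ∈ ω, x ∈ S) :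
    π ω ∈ Subgroup.closure (cs.simple '' S) := by
  induction ω with
  | nil => rw [cs.wordProd_nil]; exact one_mem _
  | cons i ω ih =>
    rw [cs.wordProd_cons]
    exact mul_mem (Subgroup.subset_closure ⟨i, hω i (by simp), rfl⟩)
      (ih fun x hx => hω x (by simp [hx]))

lemma exists_reduced_word_subset (S : Set B) (u : W)
    (hu : u ∈ Subgroup.closure (cs.simple '' S)) :
    ∃ ω : List B, cs.IsReduced ω ∧ π ω = u ∧ ∀ x ∈ ω, x ∈ S := by
  have step : ∃ ω : List B, π ω = u ∧ ∀ x ∈ ω, x ∈ S := by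
    refine Subgroup.closure_induction ?_ ?_ ?_ ?_ hu
    · rintro x ⟨i, hiS, rfl⟩
      exact ⟨[i], by simp, by simpa using hiS⟩
    · exact ⟨[], by simp, by simp⟩
    · rintro x y _ _ ⟨ω₁, h1, h1'⟩ ⟨ω₂, h2, h2'⟩
      refine ⟨ω₁ ++ ω₂, by rw [cs.wordProd_append, h1, h2], ?_⟩
      intro z hz
      rcases List.mem_append.mp hz with h | h
      · exact h1' z h
      · exact h2' z h
    · rintro x _ ⟨ω, h1, h1'⟩
      refine ⟨ω.reverse, by rw [cs.wordProd_reverse, h1], ?_⟩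
      intro z hz
      exact h1' z (List.mem_reverse.mp hz)
  obtain ⟨ω, hprod, hsub⟩ := step
  obtain ⟨ω', h1, h2, h3⟩ := reduce_word cs ω.length ω le_rfl
  exact ⟨ω', h1, by rw [h2, hprod], fun x hx => hsub x (h3 x hx)⟩

/-- If `d` has minimal length in its coset `W_I d`, lengths add. -/
lemma parabolic_add (S : Set B) (d : W)
    (hmin : ∀ v ∈ Subgroup.closure (cs.simple '' S), ℓ d ≤ ℓ (v * d)) :
    ∀ u ∈ Subgroup.closure (cs.simple '' S), ℓ (u * d) = ℓ u + ℓ d := by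
  obtain ⟨ωd, hωd_red, hωd⟩ := cs.exists_reduced_word' d
  suffices h : ∀ (n : ℕ) (u : W), u ∈ Subgroup.closure (cs.simple '' S) → ℓ u ≤ n →
      ℓ (u * d) = ℓ u + ℓ d by
    intro u hu
    exact h (ℓ u) u hu le_rfl
  intro n
  induction n with
  | zero =>
    intro u hu h0
    have h1 : u = 1 := cs.length_eq_zero_iff.mp (by omega)
    subst h1
    simp
  | succ n ih =>
    intro u hu hun
    rcases Nat.lt_or_ge (ℓ u) (n+1) with hc | hc
    · exact ih u hu (by omega)
    have hlu : ℓ u = n + 1 := by omega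
    obtain ⟨ω, hred, hπ, hsub⟩ := exists_reduced_word_subset cs S u hu
    have hωlen : ω.length = n + 1 := by
      rw [← hred, hπ, hlu]
    cases ω with
    | nil => simp at hωlen
    | cons i ω' =>
      have hi : i ∈ S := hsub i (by simp)
      have hω'sub : ∀ x ∈ ω', x ∈ S := fun x hx => hsub x (by simp [hx])
      have hred' : cs.IsReduced ω' := by
        have := hred.drop 1
        simpa using this
      have hu' : π ω' ∈ Subgroup.closure (cs.simple '' S) := wordProd_mem cs S ω' hω'sub
      have hω'len : ω'.length = n := by simpa using hωlen
      have hlu' : ℓ (π ω') = n := by rw [hred', hω'len]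
      have hihd : ℓ (π ω' * d) = n + ℓ d := by
        rw [ih (π ω') hu' (by omega), hlu']
      have hu_eq : u = s i * π ω' := by rw [← hπ, cs.wordProd_cons]
      rcases cs.length_simple_mul (π ω' * d) i with hgt | hlt
      · rw [hu_eq, mul_assoc, hgt, hihd, ← hu_eq, hlu]
        omega
      · exfalso
        have hωdlen : ωd.length = ℓ d := hωd_red ▸ (by rw [← hωd])
        have hπcat : π (ω' ++ ωd) = π ω' * d := by
          rw [cs.wordProd_append, ← hωd]
        have hredcat : cs.IsReduced (ω' ++ ωd) := by
          unfold CoxeterSystem.IsReduced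
          rw [hπcat, List.length_append, hihd, hω'len, hωdlen]
        have hdesc : ℓ (s i * π (ω' ++ ωd)) < ℓ (π (ω' ++ ωd)) := by
          rw [hπcat]
          omega
        obtain ⟨j, hj, hje⟩ := left_exchange cs hredcat hdesc
        rw [hπcat] at hje
        rcases Nat.lt_or_ge j ω'.length with hjlt | hjge
        · rw [List.eraseIdx_append_of_lt_length hjlt, cs.wordProd_append, ← hωd] at hje
          have heq : s i * π ω' = π (ω'.eraseIdx j) := mul_right_cancel (by
            rw [← hje, mul_assoc])
          have h1 : ℓ u ≤ (ω'.eraseIdx j).length := by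
            rw [hu_eq, heq]
            exact cs.length_wordProd_le _
          have h2 : (ω'.eraseIdx j).length + 1 = ω'.length :=
            List.length_eraseIdx_add_one hjlt
          omega
        · rw [List.eraseIdx_append_of_length_le hjge, cs.wordProd_append] at hje
          set v : W := (π ω')⁻¹ * s i * π ω' with hvdef
          have hv : v ∈ Subgroup.closure (cs.simple '' S) :=
            mul_mem (mul_mem (inv_mem hu') (Subgroup.subset_closure ⟨i, hi, rfl⟩)) hu'
          have hvd : v * d = π (ωd.eraseIdx (j - ω'.length)) := by
            rw [hvdef]
            calc (π ω')⁻¹ * s i * π ω' * d = (π ω')⁻¹ * (s i * (π ω' * d)) := by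
                  simp only [mul_assoc]
              _ = (π ω')⁻¹ * (π ω' * π (ωd.eraseIdx (j - ω'.length))) := by rw [hje]
              _ = π (ωd.eraseIdx (j - ω'.length)) := by rw [inv_mul_cancel_left]
          have hjd : j - ω'.length < ωd.length := by
            rw [List.length_append] at hj
            omega
          have hld : ℓ (v * d) < ℓ d := by
            rw [hvd]
            have h1 : ℓ (π (ωd.eraseIdx (j - ω'.length))) ≤ (ωd.eraseIdx (j - ω'.length)).length :=
              cs.length_wordProd_le _
            have h2 : (ωd.eraseIdx (j - ω'.length)).length + 1 = ωd.length :=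
              List.length_eraseIdx_add_one hjd
            omega
          exact absurd (hmin v hv) (by omega)

/-- Every coset `W_I w` has a minimal-length representative. -/
lemma exists_min_decomp (S : Set B) (w : W) :
    ∃ u d : W, u ∈ Subgroup.closure (cs.simple '' S) ∧ w = u * d ∧
      ∀ v ∈ Subgroup.closure (cs.simple '' S), ℓ d ≤ ℓ (v * d) := by
  set P := Subgroup.closure (cs.simple '' S) with hP
  set L : Set ℕ := {n | ∃ u ∈ P, n = ℓ (u * w)} with hL
  have hLne : L.Nonempty := ⟨ℓ w, 1, one_mem _, by simp⟩
  obtain ⟨u₀, hu₀, hmin⟩ : ∃ u ∈ P, sInf L = ℓ (u * w) := Nat.sInf_mem hLne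
  refine ⟨u₀⁻¹, u₀ * w, inv_mem hu₀, by rw [inv_mul_cancel_left], ?_⟩
  intro v hv
  have hmem : ℓ (v * (u₀ * w)) ∈ L := ⟨v * u₀, mul_mem hv hu₀, by rw [mul_assoc]⟩
  have := Nat.sInf_le hmem
  omega

lemma decomp_unique (S : Set B) {u₁ u₂ d₁ d₂ : W}
    (hu₁ : u₁ ∈ Subgroup.closure (cs.simple '' S))
    (hu₂ : u₂ ∈ Subgroup.closure (cs.simple '' S))
    (hd₁ : ∀ v ∈ Subgroup.closure (cs.simple '' S), ℓ (v * d₁) = ℓ v + ℓ d₁)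
    (hd₂ : ∀ v ∈ Subgroup.closure (cs.simple '' S), ℓ (v * d₂) = ℓ v + ℓ d₂)
    (heq : u₁ * d₁ = u₂ * d₂) : u₁ = u₂ ∧ d₁ = d₂ := by
  set v := u₂⁻¹ * u₁ with hv
  have hvP : v ∈ Subgroup.closure (cs.simple '' S) := mul_mem (inv_mem hu₂) hu₁
  have h1 : v * d₁ = d₂ := by
    rw [hv, mul_assoc, heq, inv_mul_cancel_left]
  have h2 : v⁻¹ * d₂ = d₁ := by
    rw [← h1, inv_mul_cancel_left]
  have e1 : ℓ d₂ = ℓ v + ℓ d₁ := by rw [← h1]; exact hd₁ v hvP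
  have e2 : ℓ d₁ = ℓ v⁻¹ + ℓ d₂ := by rw [← h2]; exact hd₂ v⁻¹ (inv_mem hvP)
  rw [cs.length_inv] at e2
  have hv0 : ℓ v = 0 := by omega
  have hv1 : v = 1 := cs.length_eq_zero_iff.mp hv0
  have hu : u₁ = u₂ := by
    have := hv ▸ hv1
    exact (inv_mul_eq_one.mp this).symm
  exact ⟨hu, by rw [← h1, hv1, one_mul]⟩

variable {H : Type} [Ring H] [Algebra (Polynomial ℤ) H]

lemma T_mul_of_length_add (hd : HeckeAlgebraData cs (Polynomial ℤ) X H) :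
    ∀ (v w : W), ℓ (v * w) = ℓ v + ℓ w → hd.T v * hd.T w = hd.T (v * w) := by
  suffices h : ∀ (n : ℕ) (v w : W), ℓ v ≤ n → ℓ (v * w) = ℓ v + ℓ w →
      hd.T v * hd.T w = hd.T (v * w) by
    intro v w hadd
    exact h (ℓ v) v w le_rfl hadd
  intro n
  induction n with
  | zero =>
    intro v w hv hadd
    have h1 : v = 1 := cs.length_eq_zero_iff.mp (by omega)
    subst h1
    rw [hd.T_one, one_mul, one_mul]
  | succ n ih =>
    intro v w hvn hadd
    rcases Nat.lt_or_ge (ℓ v) (n+1) with hc | hc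
    · exact ih v w (by omega) hadd
    have hlv : ℓ v = n + 1 := by omega
    have hv1 : v ≠ 1 := by
      intro h
      rw [h, cs.length_one] at hlv
      omega
    obtain ⟨i, hi⟩ := cs.exists_leftDescent_of_ne_one hv1
    have hi' : cs.length (cs.simple i * v) < cs.length v := hi
    have hlv' : cs.length (cs.simple i * v) + 1 = cs.length v := by
      rcases cs.length_simple_mul v i with h | h
      · omega
      · exact h
    have hT : hd.T v = hd.T (s i) * hd.T (s i * v) := by
      rw [hd.T_mul_of_gt i (s i * v) (by rw [cs.simple_mul_simple_cancel_left]; omega),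
        cs.simple_mul_simple_cancel_left]
    have hlv'w : ℓ (s i * v * w) = ℓ (s i * v) + ℓ w := by
      have hub : ℓ (s i * v * w) ≤ ℓ (s i * v) + ℓ w := cs.length_mul_le _ _
      have hmul : v * w = s i * (s i * v * w) := by
        rw [← mul_assoc, cs.simple_mul_simple_cancel_left]
      have hlb : ℓ (v * w) ≤ 1 + ℓ (s i * v * w) := by
        rw [hmul]
        have := cs.length_mul_le (s i) (s i * v * w)
        rwa [cs.length_simple] at this
      omega
    have hfin : ℓ (s i * v * w) < ℓ (s i * (s i * v * w)) := by
      rw [← mul_assoc, cs.simple_mul_simple_cancel_left]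
      omega
    calc hd.T v * hd.T w = hd.T (s i) * (hd.T (s i * v) * hd.T w) := by rw [hT, mul_assoc]
      _ = hd.T (s i) * hd.T (s i * v * w) := by rw [ih (s i * v) w (by omega) hlv'w]
      _ = hd.T (s i * (s i * v * w)) := hd.T_mul_of_gt i (s i * v * w) hfin
      _ = hd.T (v * w) := by rw [← mul_assoc, cs.simple_mul_simple_cancel_left]

end StmtAux

open StmtAux in
/-- For finitary `I ⊆ J ⊆ S`, in the Hecke algebra over `ℤ[q]` one has
`x_J = h·x_I` where `h = Σ_{w : w⁻¹ ∈ D_I ∩ W_J} T_w`, `D_I` being the set of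
distinguished (minimal-length) right coset representatives of `W_I` in `W`.
In particular `x_J H_q ⊆ x_I H_q`. -/
theorem stmt2 {B W : Type} [Group W] {M : CoxeterMatrix B} (cs : CoxeterSystem M W)
    (H : Type) [Ring H] [Algebra (Polynomial ℤ) H]
    (hd : HeckeAlgebraData cs (Polynomial ℤ) X H)
    (I J : Set B) (hIJ : I ⊆ J)
    (WI : Subgroup W) (hWI : WI = Subgroup.closure (cs.simple '' I))
    (WJ : Subgroup W) (hWJ : WJ = Subgroup.closure (cs.simple '' J))
    (hfinI : Set.Finite (WI : Set W)) (hfinJ : Set.Finite (WJ : Set W))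
    -- `D_I`: the distinguished right coset representatives of `W_I` in `W`
    (DI : Set W) (hDI : DI = {w : W | ∀ u ∈ WI, cs.length (u * w) = cs.length u + cs.length w})
    (hfinh : Set.Finite {w : W | w⁻¹ ∈ DI ∧ w ∈ WJ}) :
    (∑ w ∈ hfinJ.toFinset, hd.T w)
        = (∑ w ∈ hfinh.toFinset, hd.T w) * (∑ w ∈ hfinI.toFinset, hd.T w) ∧
      ∀ a : H, ∃ b : H,
        (∑ w ∈ hfinJ.toFinset, hd.T w) * a = (∑ w ∈ hfinI.toFinset, hd.T w) * b := by
  subst hWI hWJ hDI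
  set WI := Subgroup.closure (cs.simple '' I) with hWI
  set WJ := Subgroup.closure (cs.simple '' J) with hWJ
  have hIJle : WI ≤ WJ := Subgroup.closure_mono (Set.image_mono hIJ)
  -- the distinguished set as a predicate
  have hDIiff : ∀ d : W, (d ∈ {w : W | ∀ u ∈ WI, cs.length (u * w) = cs.length u + cs.length w})
      ↔ ∀ u ∈ WI, cs.length (u * d) = cs.length u + cs.length d := fun d => Iff.rfl
  -- Part 1 : x_J = h * x_I
  have part1 : (∑ w ∈ hfinJ.toFinset, hd.T w)
      = (∑ w ∈ hfinh.toFinset, hd.T w) * (∑ w ∈ hfinI.toFinset, hd.T w) := by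
    rw [Finset.sum_mul_sum]
    have hstep : ∀ d ∈ hfinh.toFinset, ∀ u ∈ hfinI.toFinset,
        hd.T d * hd.T u = hd.T (d * u) := by
      intro d hdmem u humem
      rw [Set.Finite.mem_toFinset] at hdmem humem
      refine T_mul_of_length_add cs hd d u ?_
      have h1 := hdmem.1 u⁻¹ (inv_mem humem)
      have h2 : (d * u)⁻¹ = u⁻¹ * d⁻¹ := mul_inv_rev d u
      calc cs.length (d * u) = cs.length ((d * u)⁻¹) := (cs.length_inv _).symm
        _ = cs.length (u⁻¹ * d⁻¹) := by rw [h2]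
        _ = cs.length u⁻¹ + cs.length d⁻¹ := h1
        _ = cs.length d + cs.length u := by rw [cs.length_inv, cs.length_inv]; omega
    calc (∑ w ∈ hfinJ.toFinset, hd.T w)
        = ∑ p ∈ hfinh.toFinset ×ˢ hfinI.toFinset, hd.T (p.1 * p.2) := by
          refine (Finset.sum_bij (fun p _ => p.1 * p.2) ?_ ?_ ?_ ?_).symm
          · rintro ⟨d, u⟩ hp
            rw [Finset.mem_product, Set.Finite.mem_toFinset, Set.Finite.mem_toFinset] at hp
            rw [Set.Finite.mem_toFinset]
            exact mul_mem hp.1.2 (hIJle hp.2)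
          · rintro ⟨d₁, u₁⟩ hp₁ ⟨d₂, u₂⟩ hp₂ heq
            rw [Finset.mem_product, Set.Finite.mem_toFinset, Set.Finite.mem_toFinset] at hp₁ hp₂
            have heq0 : d₁ * u₁ = d₂ * u₂ := heq
            have heq' : u₁⁻¹ * d₁⁻¹ = u₂⁻¹ * d₂⁻¹ := by
              rw [← mul_inv_rev, ← mul_inv_rev, heq0]
            obtain ⟨e1, e2⟩ := decomp_unique cs I (inv_mem hp₁.2) (inv_mem hp₂.2)
              hp₁.1.1 hp₂.1.1 heq'
            have : d₁ = d₂ := by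
              have := congrArg (·⁻¹) e2
              simpa using this
            have hu : u₁ = u₂ := by
              have := congrArg (·⁻¹) e1
              simpa using this
            exact Prod.ext this hu
          · intro w hw
            rw [Set.Finite.mem_toFinset] at hw
            obtain ⟨u, d, huWI, hdec, hmin⟩ := exists_min_decomp cs I w⁻¹
            have hadd := parabolic_add cs I d hmin
            have hw_eq : w = d⁻¹ * u⁻¹ := by
              rw [← mul_inv_rev, ← hdec, inv_inv]
            refine ⟨(d⁻¹, u⁻¹), ?_, hw_eq.symm⟩
            rw [Finset.mem_product, Set.Finite.mem_toFinset, Set.Finite.mem_toFinset]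
            refine ⟨⟨by rwa [inv_inv], ?_⟩, inv_mem huWI⟩
            · -- d⁻¹ ∈ WJ
              have : d⁻¹ = w * u := by rw [hw_eq, mul_assoc, inv_mul_cancel, mul_one]
              rw [this]
              exact mul_mem hw (hIJle huWI)
          · intro p hp
            rfl
      _ = ∑ d ∈ hfinh.toFinset, ∑ u ∈ hfinI.toFinset, hd.T (d * u) :=
          Finset.sum_product _ _ _
      _ = ∑ d ∈ hfinh.toFinset, ∑ u ∈ hfinI.toFinset, hd.T d * hd.T u := by
          refine Finset.sum_congr rfl fun d hdm => Finset.sum_congr rfl fun u hum => ?_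
          exact (hstep d hdm u hum).symm
  refine ⟨part1, ?_⟩
  -- Part 2 : x_J = x_I * h'
  have hfinK : Set.Finite {w : W | w ∈ {w : W | ∀ u ∈ WI,
      cs.length (u * w) = cs.length u + cs.length w} ∧ w ∈ WJ} :=
    hfinJ.subset fun w hw => hw.2
  have part2 : (∑ w ∈ hfinJ.toFinset, hd.T w)
      = (∑ w ∈ hfinI.toFinset, hd.T w) * (∑ w ∈ hfinK.toFinset, hd.T w) := by
    rw [Finset.sum_mul_sum]
    calc (∑ w ∈ hfinJ.toFinset, hd.T w)
        = ∑ p ∈ hfinI.toFinset ×ˢ hfinK.toFinset, hd.T (p.1 * p.2) := by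
          refine (Finset.sum_bij (fun p _ => p.1 * p.2) ?_ ?_ ?_ ?_).symm
          · rintro ⟨u, d⟩ hp
            rw [Finset.mem_product, Set.Finite.mem_toFinset, Set.Finite.mem_toFinset] at hp
            rw [Set.Finite.mem_toFinset]
            exact mul_mem (hIJle hp.1) hp.2.2
          · rintro ⟨u₁, d₁⟩ hp₁ ⟨u₂, d₂⟩ hp₂ heq
            rw [Finset.mem_product, Set.Finite.mem_toFinset, Set.Finite.mem_toFinset] at hp₁ hp₂
            have heq0 : u₁ * d₁ = u₂ * d₂ := heq
            obtain ⟨e1, e2⟩ := decomp_unique cs I hp₁.1 hp₂.1 hp₁.2.1 hp₂.2.1 heq0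
            exact Prod.ext e1 e2
          · intro w hw
            rw [Set.Finite.mem_toFinset] at hw
            obtain ⟨u, d, huWI, hdec, hmin⟩ := exists_min_decomp cs I w
            have hadd := parabolic_add cs I d hmin
            refine ⟨(u, d), ?_, hdec.symm⟩
            rw [Finset.mem_product, Set.Finite.mem_toFinset, Set.Finite.mem_toFinset]
            refine ⟨huWI, hadd, ?_⟩
            have : d = u⁻¹ * w := by rw [hdec, inv_mul_cancel_left]
            rw [this]
            exact mul_mem (inv_mem (hIJle huWI)) hw
          · intro p hp
            rfl
      _ = ∑ u ∈ hfinI.toFinset, ∑ d ∈ hfinK.toFinset, hd.T (u * d) :=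
          Finset.sum_product _ _ _
      _ = ∑ u ∈ hfinI.toFinset, ∑ d ∈ hfinK.toFinset, hd.T u * hd.T d := by
          refine Finset.sum_congr rfl fun u hum => Finset.sum_congr rfl fun d hdm => ?_
          rw [Set.Finite.mem_toFinset] at hum hdm
          exact (T_mul_of_length_add cs hd u d (hdm.1 u hum)).symm
  intro a
  refine ⟨(∑ w ∈ hfinK.toFinset, hd.T w) * a, ?_⟩
  rw [part2, mul_assoc]
end

section
/- In the Hecke algebra of the infinite dihedral group with generators x_1 = T_1+1 and x_2 = T_2+1, the elements x^{(m)}_{(2,1)} = 1 + Σ_{i=1}^{m−1}(T_{[i]1} + T_{[i]2}) + T_{[m]1} satisfy the recursion x^{(m)}_{(2,1)} = x^{(m−2)}_{(2,1)}(x_2 x_1 − 2q) − q² x^{(m−4)}_{(2,1)} for m ≥ 5, where T_{[i]1} = ⋯T_2T_1 (i factors, ending in T_1) and T_{[i]2} = ⋯T_1T_2 (i factors, ending in T_2). -/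
open Polynomial

/-- `altPair a b n = (T_{[n]a}, T_{[n]b})`: the pair of alternating products of `n`
factors from `{a, b}`, ending in `a` (resp. in `b`). -/
def altPair {A : Type} [Ring A] (a b : A) : ℕ → A × A
  | 0 => (1, 1)
  | n + 1 => ((altPair a b n).2 * a, (altPair a b n).1 * b)

/-- `xword T1 T2 m = x^{(m)}_{(2,1)} = 1 + Σ_{i=1}^{m−1}(T_{[i]1} + T_{[i]2}) + T_{[m]1}`. -/
def xword {A : Type} [Ring A] (T1 T2 : A) (m : ℕ) : A :=
  1 + (∑ i ∈ Finset.Icc 1 (m - 1), ((altPair T1 T2 i).1 + (altPair T1 T2 i).2))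
    + (altPair T1 T2 m).1

section aux
variable {A : Type} [Ring A] (T1 T2 q : A)

lemma auxL1 (hc1 : q*T1 = T1*q) (h1 : T1^2 = (q - 1) * T1 + q) :
    (T1+1)*((T2+1)*(T1+1) - 2*q) = T1*(T2*(T1+1)) + (T2+1-q)*(T1+1) := by
  linear_combination (norm := noncomm_ring) h1 + 2*hc1

lemma auxL2 (hc2 : q*T2 = T2*q) (h2 : T2^2 = (q - 1) * T2 + q) :
    T2*((T2+1-q)*(T1+1)) = q*(T1+1) := by
  linear_combination (norm := noncomm_ring) h2*(T1+1) + hc2*(T1+1)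

lemma auxCore (hc1 : q*T1 = T1*q) (hc2 : q*T2 = T2*q)
    (h1 : T1^2 = (q - 1) * T1 + q) (h2 : T2^2 = (q - 1) * T2 + q) :
    T1*(T2*((T1+1)*((T2+1)*(T1+1) - 2*q)))
      = T1*(T2*(T1*(T2*(T1+1)))) + q^2*(T1+1) := by
  linear_combination (norm := noncomm_ring) T1*T2*h1 + 2*(T1*T2*hc1) + T1*h2*(T1+1)
    + T1*hc2*(T1+1) + q*h1 - hc1*(T1+1)

lemma w2_add_two (n : ℕ) :
    (altPair T1 T2 (n+2)).2 = (altPair T1 T2 n).2 * (T1*T2) := by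
  simp [altPair, mul_assoc]

lemma auxD (hc1 : q*T1 = T1*q) (hc2 : q*T2 = T2*q)
    (h1 : T1^2 = (q - 1) * T1 + q) (h2 : T2^2 = (q - 1) * T2 + q)
    (hcq : ∀ a : A, q * a = a * q) (n : ℕ) :
    (altPair T1 T2 (n+4)).2 * (T1+1)
      = ((altPair T1 T2 (n+2)).2 * (T1+1)) * ((T2+1)*(T1+1) - 2*q)
        - q^2 * ((altPair T1 T2 n).2 * (T1+1)) := by
  have hcore := auxCore T1 T2 q hc1 hc2 h1 h2
  have e1 : (altPair T1 T2 (n+4)).2 = (altPair T1 T2 n).2 * (T1*T2) * (T1*T2) := by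
    rw [show n+4 = (n+2)+2 from rfl, w2_add_two, w2_add_two]
  rw [e1, w2_add_two]
  set w := (altPair T1 T2 n).2 with hw
  have hcw : q * w = w * q := hcq w
  linear_combination (norm := noncomm_ring) (-(w*hcore)) + q*(hcw*(T1+1)) + hcw*(q*(T1+1))

lemma xword_step (k : ℕ) :
    xword T1 T2 (k+2) = xword T1 T2 (k+1) + (altPair T1 T2 (k+1)).2 * (T1+1) := by
  have hs : ∑ i ∈ Finset.Icc 1 (k+1), ((altPair T1 T2 i).1 + (altPair T1 T2 i).2)
      = (∑ i ∈ Finset.Icc 1 k, ((altPair T1 T2 i).1 + (altPair T1 T2 i).2))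
        + ((altPair T1 T2 (k+1)).1 + (altPair T1 T2 (k+1)).2) :=
    Finset.sum_Icc_succ_top (by omega) _
  show 1 + (∑ i ∈ Finset.Icc 1 (k+2-1), _) + (altPair T1 T2 (k+2)).1 = _
  rw [show k+2-1 = k+1 from rfl, hs]
  show _ = (1 + (∑ i ∈ Finset.Icc 1 (k+1-1), _) + (altPair T1 T2 (k+1)).1) + _
  rw [show k+1-1 = k from rfl]
  rw [show (altPair T1 T2 (k+2)).1 = (altPair T1 T2 (k+1)).2 * T1 from rfl,
    mul_add, mul_one]
  abel

end aux

theorem stmt3 (A : Type) [Ring A] [Algebra (Polynomial ℤ) A]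
    (T1 T2 : A) (q : A) (hq : q = algebraMap (Polynomial ℤ) A X)
    (h1 : T1 ^ 2 = (q - 1) * T1 + q) (h2 : T2 ^ 2 = (q - 1) * T2 + q)
    (m : ℕ) (hm : 5 ≤ m) :
    xword T1 T2 m
      = xword T1 T2 (m - 2) * ((T2 + 1) * (T1 + 1) - 2 * q)
        - q ^ 2 * xword T1 T2 (m - 4) := by
  have hcq : ∀ a : A, q * a = a * q := by
    intro a; rw [hq]; exact Algebra.commutes X a
  have hc1 := hcq T1
  have hc2 := hcq T2
  obtain ⟨n, rfl⟩ : ∃ n, m = n + 5 := ⟨m - 5, by omega⟩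
  clear hm
  rw [show n+5-2 = n+3 from rfl, show n+5-4 = n+1 from rfl]
  induction n with
  | zero =>
    have hL1 := auxL1 T1 T2 q hc1 h1
    have hL2 := auxL2 T1 T2 q hc2 h2
    have hcore := auxCore T1 T2 q hc1 hc2 h1 h2
    have e5 : Finset.Icc 1 (5-1) = ({1,2,3,4} : Finset ℕ) := rfl
    have e3 : Finset.Icc 1 (3-1) = ({1,2} : Finset ℕ) := rfl
    have e1 : Finset.Icc 1 (1-1) = (∅ : Finset ℕ) := rfl
    rw [show (0:ℕ)+5 = 5 from rfl, show (0:ℕ)+3 = 3 from rfl, show (0:ℕ)+1 = 1 from rfl]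
    simp only [xword, e5, e3, e1]
    rw [Finset.sum_insert (by decide), Finset.sum_insert (by decide),
      Finset.sum_insert (by decide), Finset.sum_singleton,
      Finset.sum_insert (by decide), Finset.sum_singleton, Finset.sum_empty]
    rw [show (altPair T1 T2 1).1 = 1*T1 from rfl,
      show (altPair T1 T2 1).2 = 1*T2 from rfl,
      show (altPair T1 T2 2).1 = 1*T2*T1 from rfl,
      show (altPair T1 T2 2).2 = 1*T1*T2 from rfl,
      show (altPair T1 T2 3).1 = 1*T1*T2*T1 from rfl,
      show (altPair T1 T2 3).2 = 1*T2*T1*T2 from rfl,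
      show (altPair T1 T2 4).1 = 1*T2*T1*T2*T1 from rfl,
      show (altPair T1 T2 4).2 = 1*T1*T2*T1*T2 from rfl,
      show (altPair T1 T2 5).1 = 1*T1*T2*T1*T2*T1 from rfl]
    linear_combination (norm := noncomm_ring) (-(1+T2))*hL1 - hL2 - hcore
  | succ n ih =>
    have hD := auxD T1 T2 q hc1 hc2 h1 h2 hcq (n+1)
    rw [show n+1+2 = n+3 from rfl, show n+1+4 = n+5 from rfl] at hD
    rw [show n+1+5 = (n+4)+2 from rfl, xword_step T1 T2 (n+4),
      show n+4+1 = n+5 from rfl, ih,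
      show n+1+3 = (n+2)+2 from rfl, xword_step T1 T2 (n+2),
      show n+2+1 = n+3 from rfl,
      show n+1+1 = n+2 from rfl, xword_step T1 T2 n, hD]
    noncomm_ring
end

section
/- In the Hecke algebra of the infinite dihedral group, for m ≥ 3, x^{(m)}_{(2,1)} · x_2 x_1 = x^{(m+2)}_{(2,1)} + 2q·x^{(m)}_{(2,1)} + q²·x^{(m−2)}_{(2,1)}, where x_i = T_i + 1 and x^{(m)}_{(2,1)} = 1 + Σ_{i=1}^{m−1}(T_{[i]1} + T_{[i]2}) + T_{[m]1}. -/
open Polynomial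

private lemma xword_succ {A : Type} [Ring A] (T1 T2 : A) (n : ℕ) :
    xword T1 T2 (n + 2) = xword T1 T2 (n + 1)
      + ((altPair T1 T2 (n + 1)).2 + (altPair T1 T2 (n + 2)).1) := by
  unfold xword
  rw [show n + 2 - 1 = n + 1 from rfl, show n + 1 - 1 = n from rfl,
    show n + 2 = (n + 1) + 1 from rfl,
    Finset.sum_Icc_succ_top (Nat.succ_le_succ (Nat.zero_le n))]
  abel

private lemma corb {A : Type} [Ring A] (T1 T2 q b : A)
    (hc1 : q * T1 = T1 * q) (hc2 : q * T2 = T2 * q) (hcb : q * b = b * q)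
    (h1 : T1 * T1 = (q - 1) * T1 + q) (h2 : T2 * T2 = (q - 1) * T2 + q) :
    (b * T1 * T2 + b * T1 * T2 * T1) * ((T2 + 1) * (T1 + 1))
      = b * T1 * T2 * T1 * T2 + b * T1 * T2 * T1 * T2 * T1
        + 2 * q * (b * T1 * T2 + b * T1 * T2 * T1) + q ^ 2 * (b + b * T1) := by
  have e1 : ∀ x : A, T1 * (T1 * x) = q * (T1 * x) - (T1 * x) + q * x := by
    intro x; rw [← mul_assoc, h1]; noncomm_ring
  have e2 : ∀ x : A, T2 * (T2 * x) = q * (T2 * x) - (T2 * x) + q * x := by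
    intro x; rw [← mul_assoc, h2]; noncomm_ring
  have f1 : ∀ x : A, T1 * (q * x) = q * (T1 * x) := by
    intro x; rw [← mul_assoc, ← hc1, mul_assoc]
  have f2 : ∀ x : A, T2 * (q * x) = q * (T2 * x) := by
    intro x; rw [← mul_assoc, ← hc2, mul_assoc]
  have fb : ∀ x : A, b * (q * x) = q * (b * x) := by
    intro x; rw [← mul_assoc, ← hcb, mul_assoc]
  have g1 : T1 * T1 = q * T1 - T1 + q := by rw [h1]; noncomm_ring
  have g2 : T2 * T2 = q * T2 - T2 + q := by rw [h2]; noncomm_ring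
  simp only [mul_add, add_mul, mul_sub, sub_mul, mul_one, one_mul, mul_assoc, e1, e2, f1, f2, fb,
    g1, g2, hc1.symm, hc2.symm, hcb.symm]
  noncomm_ring

private lemma step {A : Type} [Ring A] (T1 T2 q : A)
    (hc1 : q * T1 = T1 * q) (hc2 : q * T2 = T2 * q)
    (hcb : ∀ x : A, q * x = x * q)
    (h1 : T1 * T1 = (q - 1) * T1 + q) (h2 : T2 * T2 = (q - 1) * T2 + q) (k : ℕ) :
    ((altPair T1 T2 (k + 2)).2 + (altPair T1 T2 (k + 3)).1) * ((T2 + 1) * (T1 + 1))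
      = ((altPair T1 T2 (k + 4)).2 + (altPair T1 T2 (k + 5)).1)
        + 2 * q * ((altPair T1 T2 (k + 2)).2 + (altPair T1 T2 (k + 3)).1)
        + q ^ 2 * ((altPair T1 T2 k).2 + (altPair T1 T2 (k + 1)).1) := by
  simp only [show k + 5 = (k+4)+1 from rfl, show k + 4 = (k+3)+1 from rfl,
    show k + 3 = (k+2)+1 from rfl, show k + 2 = (k+1)+1 from rfl, altPair]
  have := corb T1 T2 q (altPair T1 T2 k).2 hc1 hc2 (hcb _) h1 h2
  simp only [mul_assoc] at this ⊢
  convert this using 2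

/-- In the Hecke algebra of the infinite dihedral group, for `m ≥ 3`,
`x^{(m)}_{(2,1)} · x₂x₁ = x^{(m+2)}_{(2,1)} + 2q·x^{(m)}_{(2,1)} + q²·x^{(m−2)}_{(2,1)}`,
where `xᵢ = Tᵢ + 1`. -/
theorem stmt4 (A : Type) [Ring A] [Algebra (Polynomial ℤ) A]
    (T1 T2 : A) (q : A) (hq : q = algebraMap (Polynomial ℤ) A X)
    (h1 : T1 ^ 2 = (q - 1) * T1 + q) (h2 : T2 ^ 2 = (q - 1) * T2 + q)
    (m : ℕ) (hm : 3 ≤ m) :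
    xword T1 T2 m * ((T2 + 1) * (T1 + 1))
      = xword T1 T2 (m + 2) + 2 * q * xword T1 T2 m + q ^ 2 * xword T1 T2 (m - 2) := by
  have hcb : ∀ x : A, q * x = x * q := by
    intro x; rw [hq]; exact (Algebra.commutes _ _)
  have h1' : T1 * T1 = (q - 1) * T1 + q := by rw [← sq]; exact h1
  have h2' : T2 * T2 = (q - 1) * T2 + q := by rw [← sq]; exact h2
  obtain ⟨k, rfl⟩ : ∃ k, m = k + 3 := ⟨m - 3, by omega⟩
  clear hm
  induction k with
  | zero =>
      show xword T1 T2 3 * ((T2 + 1) * (T1 + 1))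
        = xword T1 T2 5 + 2 * q * xword T1 T2 3 + q ^ 2 * xword T1 T2 1
      have hx1 : xword T1 T2 1 = 1 + T1 := by simp [xword, altPair]
      have c2 : xword T1 T2 2 = xword T1 T2 1
          + ((altPair T1 T2 1).2 + (altPair T1 T2 2).1) := xword_succ T1 T2 0
      have c3 : xword T1 T2 3 = xword T1 T2 2
          + ((altPair T1 T2 2).2 + (altPair T1 T2 3).1) := xword_succ T1 T2 1
      have c4 : xword T1 T2 4 = xword T1 T2 3
          + ((altPair T1 T2 3).2 + (altPair T1 T2 4).1) := xword_succ T1 T2 2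
      have c5 : xword T1 T2 5 = xword T1 T2 4
          + ((altPair T1 T2 4).2 + (altPair T1 T2 5).1) := xword_succ T1 T2 3
      rw [c5, c4, c3, c2, hx1]
      have a1 : altPair T1 T2 1 = (1*T1, 1*T2) := rfl
      have a2 : altPair T1 T2 2 = (1*T2*T1, 1*T1*T2) := rfl
      have a3 : altPair T1 T2 3 = (1*T1*T2*T1, 1*T2*T1*T2) := rfl
      have a4 : altPair T1 T2 4 = (1*T2*T1*T2*T1, 1*T1*T2*T1*T2) := rfl
      have a5 : altPair T1 T2 5 = (1*T1*T2*T1*T2*T1, 1*T2*T1*T2*T1*T2) := rfl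
      rw [a1, a2, a3, a4, a5]
      have e1 : ∀ x : A, T1 * (T1 * x) = q * (T1 * x) - (T1 * x) + q * x := by
        intro x; rw [← mul_assoc, h1']; noncomm_ring
      have e2 : ∀ x : A, T2 * (T2 * x) = q * (T2 * x) - (T2 * x) + q * x := by
        intro x; rw [← mul_assoc, h2']; noncomm_ring
      have f1 : ∀ x : A, T1 * (q * x) = q * (T1 * x) := by
        intro x; rw [← mul_assoc, ← hcb, mul_assoc]
      have f2 : ∀ x : A, T2 * (q * x) = q * (T2 * x) := by
        intro x; rw [← mul_assoc, ← hcb, mul_assoc]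
      have g1 : T1 * T1 = q * T1 - T1 + q := by rw [h1']; noncomm_ring
      have g2 : T2 * T2 = q * T2 - T2 + q := by rw [h2']; noncomm_ring
      simp only [mul_add, add_mul, mul_sub, sub_mul, mul_one, one_mul, mul_assoc, e1, e2, f1, f2,
        g1, g2, (hcb T1).symm, (hcb T2).symm]
      noncomm_ring
  | succ k ih =>
      simp only [show k + 1 + 3 = k + 4 from by omega, show k + 4 + 2 = k + 6 from by omega,
        show k + 4 - 2 = k + 2 from by omega, show k + 3 + 2 = k + 5 from by omega,
        show k + 3 - 2 = k + 1 from by omega] at ih ⊢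
      have r4 : xword T1 T2 (k+4) = xword T1 T2 (k+3)
          + ((altPair T1 T2 (k+3)).2 + (altPair T1 T2 (k+4)).1) := by
        have := xword_succ T1 T2 (k+2)
        rwa [show k+2+2 = k+4 from by omega, show k+2+1 = k+3 from by omega] at this
      have r6 : xword T1 T2 (k+6) = xword T1 T2 (k+5)
          + ((altPair T1 T2 (k+5)).2 + (altPair T1 T2 (k+6)).1) := by
        have := xword_succ T1 T2 (k+4)
        rwa [show k+4+2 = k+6 from by omega, show k+4+1 = k+5 from by omega] at this
      have r2 : xword T1 T2 (k+2) = xword T1 T2 (k+1)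
          + ((altPair T1 T2 (k+1)).2 + (altPair T1 T2 (k+2)).1) := xword_succ T1 T2 k
      have hs := step T1 T2 q (hcb T1) (hcb T2) hcb h1' h2' (k+1)
      rw [show k+1+2 = k+3 from by omega, show k+1+3 = k+4 from by omega,
        show k+1+4 = k+5 from by omega, show k+1+5 = k+6 from by omega] at hs
      rw [r4, r6, r2, add_mul, ih, hs]
      noncomm_ring
end

section
/- In the Hecke algebra of the infinite dihedral group, x^{(m)}_{(2,1)} = Σ_{i=0}^{⌊(m−1)/2⌋} C(m−i−1, i)·(−q)^i · x_{[m−2i]1}, where x_{[j]1} = ⋯x_2 x_1 denotes the alternating product of j factors in x_1 = T_1+1 and x_2 = T_2+1 ending in x_1, and C(·,·) is the binomial coefficient. -/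
open Polynomial

section Aux
variable {R : Type} [Ring R]

def cg (a b : R) (n : ℕ) : R := if n % 2 = 0 then a else b

lemma cg_succ (a b : R) (n : ℕ) : cg a b (n+1) = cg b a n := by
  unfold cg; split_ifs <;> first | rfl | omega

lemma cg_mod (a b : R) {n m : ℕ} (h : n % 2 = m % 2) : cg a b n = cg a b m := by
  unfold cg; rw [h]

lemma cg_add_one (a b : R) (n : ℕ) : cg a b n + 1 = cg (a+1) (b+1) n := by
  unfold cg; split_ifs <;> rfl

lemma altPair_succ (a b : R) (n : ℕ) :
    (altPair a b (n+1)).1 = cg a b n * (altPair a b n).1 ∧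
    (altPair a b (n+1)).2 = cg b a n * (altPair a b n).2 := by
  induction n with
  | zero => simp [altPair, cg]
  | succ k ih =>
    constructor
    · show (altPair a b (k+1)).2 * a = _
      rw [ih.2, cg_succ, mul_assoc]
      rfl
    · show (altPair a b (k+1)).1 * b = _
      rw [ih.1, cg_succ, mul_assoc]
      rfl

lemma xword_succ_s5 (T1 T2 : R) (m : ℕ) (hm : 1 ≤ m) :
    xword T1 T2 (m+1) = xword T1 T2 m + (altPair T1 T2 m).2 + (altPair T1 T2 (m+1)).1 := by
  obtain ⟨b, rfl⟩ : ∃ b, m = b + 1 := ⟨m - 1, by omega⟩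
  unfold xword
  rw [show b + 1 + 1 - 1 = b + 1 from rfl, Finset.sum_Icc_succ_top (by omega : 1 ≤ b + 1),
    show b + 1 - 1 = b from rfl]
  abel

end Aux

section Key
variable {R : Type} [Ring R]

lemma cg_sq (T1 T2 q : R) (h1 : T1 ^ 2 = (q - 1) * T1 + q) (h2 : T2 ^ 2 = (q - 1) * T2 + q)
    (n : ℕ) : cg T1 T2 n * cg T1 T2 n = (q - 1) * cg T1 T2 n + q := by
  unfold cg; split_ifs
  · rw [← pow_two]; exact h1
  · rw [← pow_two]; exact h2

lemma key (T1 T2 q : R) (h1 : T1 ^ 2 = (q - 1) * T1 + q) (h2 : T2 ^ 2 = (q - 1) * T2 + q) :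
    ∀ m, 2 ≤ m → (cg T1 T2 m + 1) * xword T1 T2 m
      = xword T1 T2 (m+1) + q * xword T1 T2 (m-1) := by
  intro m
  induction m using Nat.strong_induction_on with
  | _ m ih =>
  intro hm
  have h1' : T1 * T1 = (q - 1) * T1 + q := by rw [← pow_two]; exact h1
  have h2' : T2 * T2 = (q - 1) * T2 + q := by rw [← pow_two]; exact h2
  rcases m with _ | _ | _ | _ | k
  · omega
  · omega
  · -- m = 2
    have hW1 : xword T1 T2 1 = 1 + T1 := by
      simp [xword, altPair]
    have hW2 : xword T1 T2 2 = 1 + (T1 + T2) + T2 * T1 := by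
      rw [xword_succ_s5 T1 T2 1 (by omega), hW1]
      simp [altPair]
      abel
    have hW3 : xword T1 T2 3 = 1 + (T1 + T2) + T2 * T1 + T1 * T2 + T1 * T2 * T1 := by
      rw [xword_succ_s5 T1 T2 2 (by omega), hW2]
      simp [altPair, mul_assoc]
    have hc : cg T1 T2 2 = T1 := by norm_num [cg]
    show (cg T1 T2 2 + 1) * xword T1 T2 2 = xword T1 T2 3 + q * xword T1 T2 1
    rw [hc, hW2, hW3, hW1]
    have e : (T1 + 1) * (1 + (T1 + T2) + T2 * T1)
        = T1 * T1 + (T1 + T1 * T2 + T1 * (T2 * T1) + (1 + (T1 + T2) + T2 * T1)) := by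
      noncomm_ring
    rw [e, h1']
    noncomm_ring
  · -- m = 3
    have hW1 : xword T1 T2 1 = 1 + T1 := by simp [xword, altPair]
    have hW2 : xword T1 T2 2 = 1 + (T1 + T2) + T2 * T1 := by
      rw [xword_succ_s5 T1 T2 1 (by omega), hW1]
      simp [altPair]
      abel
    have hW3 : xword T1 T2 3 = 1 + (T1 + T2) + T2 * T1 + T1 * T2 + T1 * T2 * T1 := by
      rw [xword_succ_s5 T1 T2 2 (by omega), hW2]
      simp [altPair, mul_assoc]
    have hW4 : xword T1 T2 4 = 1 + (T1 + T2) + T2 * T1 + T1 * T2 + T1 * T2 * T1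
        + T2 * T1 * T2 + T2 * T1 * T2 * T1 := by
      rw [xword_succ_s5 T1 T2 3 (by omega), hW3]
      simp [altPair, mul_assoc]
    have hc : cg T1 T2 3 = T2 := by norm_num [cg]
    show (cg T1 T2 3 + 1) * xword T1 T2 3 = xword T1 T2 4 + q * xword T1 T2 2
    rw [hc, hW3, hW4, hW2]
    have e : (T2 + 1) * (1 + (T1 + T2) + T2 * T1 + T1 * T2 + T1 * T2 * T1)
        = T2 * T2 + T2 * T2 * T1 + (T2 + T2 * T1 + T2 * (T1 * T2) + T2 * (T1 * T2 * T1)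
          + (1 + (T1 + T2) + T2 * T1 + T1 * T2 + T1 * T2 * T1)) := by
      noncomm_ring
    rw [e, h2']
    noncomm_ring
  · -- m = k + 4, use ih at k + 2
    set c : R := cg T1 T2 (k+2) with hcdef
    have hcg : cg T1 T2 (k+4) = c := cg_mod _ _ (by omega)
    have IH := ih (k+2) (by omega) (by omega)
    rw [show k+2+1 = k+3 from rfl, show k+2-1 = k+1 from rfl] at IH
    -- abbreviations
    set A : ℕ → R := fun n => (altPair T1 T2 n).1 with hA
    set B : ℕ → R := fun n => (altPair T1 T2 n).2 with hB
    have eW : ∀ n, 1 ≤ n → xword T1 T2 (n+1) = xword T1 T2 n + B n + A (n+1) :=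
      fun n hn => xword_succ_s5 T1 T2 n hn
    have eA : ∀ n, A (n+1) = cg T1 T2 n * A n := fun n => (altPair_succ T1 T2 n).1
    have eB : ∀ n, B (n+1) = cg T2 T1 n * B n := fun n => (altPair_succ T1 T2 n).2
    have csq : c * c = (q-1) * c + q := cg_sq T1 T2 q h1 h2 (k+2)
    -- c * A(k+3) = (q-1) A(k+3) + q A(k+2)
    have hcA : c * A (k+3) = (q-1) * A (k+3) + q * A (k+2) := by
      have : A (k+3) = c * A (k+2) := by
        rw [eA (k+2)]
      rw [this, ← mul_assoc, csq, add_mul, mul_assoc, ← this]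
    have hBk2 : B (k+2) = c * B (k+1) := by
      rw [eB (k+1), cg_succ, hcdef]
      congr 1
      exact cg_mod _ _ (by omega)
    have hcB : c * B (k+2) = (q-1) * B (k+2) + q * B (k+1) := by
      rw [hBk2, ← mul_assoc, csq, add_mul, mul_assoc, ← hBk2]
    have hcB3 : c * B (k+3) = B (k+4) := by
      rw [eB (k+3), cg_succ]
    have hcA4 : c * A (k+4) = A (k+5) := by
      rw [eA (k+4)]
      congr 1
      exact (cg_mod _ _ (by omega)).symm
    have hcW2 : c * xword T1 T2 (k+2) = B (k+2) + A (k+3) + q * xword T1 T2 (k+1) := by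
      have h0 := IH
      rw [add_mul, one_mul, eW (k+2) (by omega)] at h0
      have h' : c * xword T1 T2 (k+2) + xword T1 T2 (k+2)
          = (B (k+2) + A (k+3) + q * xword T1 T2 (k+1)) + xword T1 T2 (k+2) := by
        rw [h0]; abel
      exact add_right_cancel h'
    -- now assemble
    show (cg T1 T2 (k+4) + 1) * xword T1 T2 (k+4) = xword T1 T2 (k+5) + q * xword T1 T2 (k+3)
    rw [hcg]
    have e4 : xword T1 T2 (k+4) = xword T1 T2 (k+3) + B (k+3) + A (k+4) := eW (k+3) (by omega)
    have e3 : xword T1 T2 (k+3) = xword T1 T2 (k+2) + B (k+2) + A (k+3) := eW (k+2) (by omega)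
    have e5 : xword T1 T2 (k+5) = xword T1 T2 (k+4) + B (k+4) + A (k+5) := eW (k+4) (by omega)
    calc (c + 1) * xword T1 T2 (k+4)
        = c * xword T1 T2 (k+2) + c * B (k+2) + c * A (k+3) + c * B (k+3) + c * A (k+4)
          + xword T1 T2 (k+4) := by rw [e4, e3]; noncomm_ring
      _ = (B (k+2) + A (k+3) + q * xword T1 T2 (k+1))
          + ((q-1) * B (k+2) + q * B (k+1)) + ((q-1) * A (k+3) + q * A (k+2))
          + B (k+4) + A (k+5) + xword T1 T2 (k+4) := by
            rw [hcW2, hcB, hcA, hcB3, hcA4]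
      _ = xword T1 T2 (k+5) + q * xword T1 T2 (k+3) := by
            rw [e5, e4, e3, eW (k+1) (by omega)]
            noncomm_ring

end Key

section Sv
variable {R : Type} [Ring R]

def Sval (T1 T2 q : R) (m : ℕ) : R :=
  ∑ i ∈ Finset.range ((m - 1) / 2 + 1),
    (((m - i - 1).choose i : R) * (-q) ^ i) * (altPair (T1 + 1) (T2 + 1) (m - 2 * i)).1

lemma S_succ (T1 T2 q : R) (hq : ∀ z : R, Commute q z) (m : ℕ) (hm : 2 ≤ m) :
    (cg T1 T2 m + 1) * Sval T1 T2 q m = Sval T1 T2 q (m+1) + q * Sval T1 T2 q (m-1) := by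
  set Y : ℕ → R := fun n => (altPair (T1+1) (T2+1) n).1 with hY
  have hcY : ∀ n, n % 2 = m % 2 → (cg T1 T2 m + 1) * Y n = Y (n+1) := by
    intro n hn
    show (cg T1 T2 m + 1) * (altPair (T1+1) (T2+1) n).1 = (altPair (T1+1) (T2+1) (n+1)).1
    rw [(altPair_succ (T1+1) (T2+1) n).1, cg_add_one, cg_mod (T1+1) (T2+1) hn]
  have hcomm : ∀ (N i : ℕ), Commute ((N : R) * (-q) ^ i) (cg T1 T2 m + 1) :=
    fun N i => (Nat.cast_commute N _).mul_left (((hq _).neg_left).pow_left i)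
  have hL : (cg T1 T2 m + 1) * Sval T1 T2 q m
      = ∑ i ∈ Finset.range (m / 2 + 1),
          (((m - i - 1).choose i : R) * (-q) ^ i) * Y (m + 1 - 2 * i) := by
    simp only [Sval, Finset.mul_sum]
    have step1 : ∀ i ∈ Finset.range ((m - 1) / 2 + 1),
        (cg T1 T2 m + 1) * ((((m - i - 1).choose i : R) * (-q) ^ i) * (altPair (T1+1) (T2+1) (m - 2*i)).1)
        = (((m - i - 1).choose i : R) * (-q) ^ i) * Y (m + 1 - 2 * i) := by
      intro i hi
      have h2i : 2 * i ≤ m - 1 := by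
        have := Finset.mem_range.mp hi; omega
      have e1 : m + 1 - 2 * i = (m - 2 * i) + 1 := by omega
      show (cg T1 T2 m + 1) * ((((m - i - 1).choose i : R) * (-q) ^ i) * Y (m - 2*i)) = _
      rw [← mul_assoc, ← (hcomm _ i).eq, mul_assoc, e1, hcY (m - 2*i) (by omega)]
    rw [Finset.sum_congr rfl step1]
    apply Finset.sum_subset (Finset.range_subset_range.mpr (by omega))
    intro i hi hni
    simp only [Finset.mem_range] at hi hni
    have hlt : m - i - 1 < i := by omega
    rw [Nat.choose_eq_zero_of_lt hlt]
    simp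
  have hS1 : Sval T1 T2 q (m+1)
      = (∑ i ∈ Finset.range (m / 2 + 1),
          (((m - i - 1).choose i : R) * (-q) ^ i) * Y (m + 1 - 2 * i))
        + ∑ j ∈ Finset.range (m / 2),
          (((m - 2 - j).choose j : R) * (-q) ^ (j+1)) * Y (m - 1 - 2 * j) := by
    simp only [Sval]
    have h0 : (m + 1 - 1) / 2 + 1 = m / 2 + 1 := by omega
    rw [h0]
    have hcongr : ∀ i ∈ Finset.range (m / 2 + 1),
        (((m + 1 - i - 1).choose i : R) * (-q) ^ i) * (altPair (T1+1) (T2+1) (m + 1 - 2*i)).1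
        = (((m - i).choose i : R) * (-q) ^ i) * Y (m + 1 - 2 * i) := by
      intro i hi
      have : m + 1 - i - 1 = m - i := by
        have := Finset.mem_range.mp hi; omega
      rw [this]
    rw [Finset.sum_congr rfl hcongr]
    rw [Finset.sum_range_succ' (fun i => (((m - i).choose i : R) * (-q) ^ i) * Y (m + 1 - 2 * i)) (m / 2)]
    rw [Finset.sum_range_succ' (fun i => (((m - i - 1).choose i : R) * (-q) ^ i) * Y (m + 1 - 2 * i)) (m / 2)]
    have hsplit : ∀ j ∈ Finset.range (m / 2),
        (((m - (j+1)).choose (j+1) : R) * (-q) ^ (j+1)) * Y (m + 1 - 2 * (j+1))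
        = (((m - (j+1) - 1).choose (j+1) : R) * (-q) ^ (j+1)) * Y (m + 1 - 2 * (j+1))
          + (((m - 2 - j).choose j : R) * (-q) ^ (j+1)) * Y (m - 1 - 2 * j) := by
      intro j hj
      have hj' := Finset.mem_range.mp hj
      have e1 : m + 1 - 2 * (j+1) = m - 1 - 2 * j := by omega
      have e2 : m - (j+1) = (m - j - 2) + 1 := by omega
      have e3 : m - (j+1) - 1 = m - j - 2 := by omega
      have e4 : m - 2 - j = m - j - 2 := by omega
      rw [e1, e3, e4, e2, Nat.choose_succ_succ]
      push_cast
      noncomm_ring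
    rw [Finset.sum_congr rfl hsplit, Finset.sum_add_distrib]
    simp only [Nat.choose_zero_right, Nat.cast_one, pow_zero, one_mul, mul_one,
      Nat.sub_zero, Nat.mul_zero]
    abel
  have hCorr : q * Sval T1 T2 q (m-1)
      = - ∑ j ∈ Finset.range (m / 2),
          (((m - 2 - j).choose j : R) * (-q) ^ (j+1)) * Y (m - 1 - 2 * j) := by
    simp only [Sval, Finset.mul_sum]
    have h0 : (m - 1 - 1) / 2 + 1 = m / 2 := by omega
    rw [h0, ← Finset.sum_neg_distrib]
    apply Finset.sum_congr rfl
    intro j hj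
    have e1 : m - 1 - j - 1 = m - 2 - j := by omega
    have hpow : q * (-q) ^ j = -(-q) ^ (j+1) := by
      rw [pow_succ', neg_mul, neg_neg]
    show q * ((((m - 1 - j - 1).choose j : R) * (-q) ^ j) * Y (m - 1 - 2*j)) = _
    rw [e1, ← mul_assoc, ← mul_assoc, ← (Nat.cast_commute ((m - 2 - j).choose j) q).eq,
      mul_assoc ((((m - 2 - j).choose j : ℕ) : R)) q ((-q) ^ j), hpow, mul_neg, neg_mul]
  rw [hL, hS1, hCorr]
  abel

end Sv

/-- In the Hecke algebra of the infinite dihedral group,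
`x^{(m)}_{(2,1)} = Σ_{i=0}^{⌊(m−1)/2⌋} C(m−i−1, i)·(−q)^i · x_{[m−2i]1}`, where
`x_{[j]1}` is the alternating product of `j` factors in `x₁ = T₁+1, x₂ = T₂+1` ending
in `x₁`. -/


theorem stmt5 (A : Type) [Ring A] [Algebra (Polynomial ℤ) A]
    (T1 T2 : A) (q : A) (hq : q = algebraMap (Polynomial ℤ) A X)
    (h1 : T1 ^ 2 = (q - 1) * T1 + q) (h2 : T2 ^ 2 = (q - 1) * T2 + q)
    (m : ℕ) (hm : 1 ≤ m) :
    xword T1 T2 m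
      = ∑ i ∈ Finset.range ((m - 1) / 2 + 1),
          (((m - i - 1).choose i : A) * (-q) ^ i) * (altPair (T1 + 1) (T2 + 1) (m - 2 * i)).1 := by
  have hq' : ∀ z : A, Commute q z := fun z => by
    rw [hq]; exact Algebra.commutes X z
  show xword T1 T2 m = Sval T1 T2 q m
  clear hq
  induction m using Nat.strong_induction_on with
  | _ m ih =>
  rcases m with _ | _ | _ | k
  · omega
  · -- m = 1
    show xword T1 T2 1 = Sval T1 T2 q 1
    simp [xword, Sval, altPair]
    abel
  · -- m = 2
    show xword T1 T2 2 = Sval T1 T2 q 2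
    rw [xword_succ_s5 T1 T2 1 (by omega)]
    simp [xword, Sval, altPair]
    noncomm_ring
  · -- m = k + 3
    have ih1 := ih (k+1) (by omega) (by omega)
    have ih2 := ih (k+2) (by omega) (by omega)
    have hk := key T1 T2 q h1 h2 (k+2) (by omega)
    have hs := S_succ T1 T2 q hq' (k+2) (by omega)
    rw [show k+2+1 = k+3 from rfl, show k+2-1 = k+1 from rfl] at hk hs
    rw [ih1, ih2] at hk
    rw [hs] at hk
    show xword T1 T2 (k+3) = Sval T1 T2 q (k+3)
    exact (add_right_cancel hk.symm)
end

section
/- The set {c_w : w ∈ W} in the 0-Hecke algebra H_0 is a monoid under multiplication, isomorphic to the Hecke monoid (W, *), where s * w = w if ℓ(sw) < ℓ(w) and s * w = sw otherwise. Moreover {c_w} is a Z-basis of H_0 and c_x c_y = c_{x*y} for all x,y ∈ W. -/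
/-- A realization of the 0-Hecke algebra of the Coxeter system `cs` over `ℤ`. -/
structure ZeroHeckeData {B W : Type} [Group W] {M : CoxeterMatrix B}
    (cs : CoxeterSystem M W) (H : Type) [Ring H] [Algebra ℤ H] where
  T : Module.Basis W ℤ H
  T_one : T 1 = 1
  T_mul_of_lt : ∀ (i : B) (w : W), cs.length (cs.simple i * w) < cs.length w →
    T (cs.simple i) * T w = -T w
  T_mul_of_gt : ∀ (i : B) (w : W), cs.length w < cs.length (cs.simple i * w) →
    T (cs.simple i) * T w = T (cs.simple i * w)

/-- The set `{c_w : w ∈ W}` in the 0-Hecke algebra `H_0` is a monoid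
under multiplication, isomorphic to the Hecke monoid `(W, *)` (with `s * w = w` if
`ℓ(sw) < ℓ(w)` and `s * w = sw` otherwise): i.e. `c_1 = 1`, `c_x c_y = c_{x*y}`, and
`w ↦ c_w` is injective.  Moreover `{c_w}` is a `ℤ`-basis of `H_0`.  Here `c_w` is the
product of the `c_s = T_s + 1` along any reduced expression of `w`, and `star` is the
associative Hecke monoid product determined by the rule for `s * w`. -/
theorem stmt14 {B W : Type} [Group W] {M : CoxeterMatrix B} (cs : CoxeterSystem M W)
    (H : Type) [Ring H] [Algebra ℤ H] (hd : ZeroHeckeData cs H)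
    (c : W → H)
    (hc : ∀ (w : W) (ω : List B), cs.wordProd ω = w → cs.IsReduced ω →
      c w = (ω.map (fun i => hd.T (cs.simple i) + 1)).prod)
    (star : W → W → W)
    (hassoc : ∀ x y z : W, star (star x y) z = star x (star y z))
    (hone : ∀ w : W, star 1 w = w)
    (hslt : ∀ (i : B) (w : W), cs.length (cs.simple i * w) < cs.length w →
      star (cs.simple i) w = w)
    (hsgt : ∀ (i : B) (w : W), cs.length w < cs.length (cs.simple i * w) →
      star (cs.simple i) w = cs.simple i * w) :
    c 1 = 1 ∧
    (∀ x y : W, c x * c y = c (star x y)) ∧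
    Function.Injective c ∧
    ∃ b : Module.Basis W ℤ H, ∀ w : W, b w = c w := by
  classical
  have hc1 : c 1 = 1 := by
    simpa using hc 1 [] (by simp) (by simp [CoxeterSystem.IsReduced])
  -- c (s i * w) = (T s + 1) * c w when length increases
  have hcs : ∀ (i : B) (w : W), cs.length w < cs.length (cs.simple i * w) →
      c (cs.simple i * w) = (hd.T (cs.simple i) + 1) * c w := by
    intro i w h
    obtain ⟨ω, hred, rfl⟩ := cs.exists_reduced_word' w
    have hlen : cs.length (cs.simple i * cs.wordProd ω) = cs.length (cs.wordProd ω) + 1 :=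
      (cs.length_simple_mul (cs.wordProd ω) i).resolve_right (by omega)
    have hred2 : cs.IsReduced (i :: ω) := by
      unfold CoxeterSystem.IsReduced at *
      rw [cs.wordProd_cons, hlen, hred]
      simp
    rw [hc _ (i :: ω) (cs.wordProd_cons i ω) hred2, hc _ ω rfl hred]
    simp
  have hTTs : ∀ i : B, hd.T (cs.simple i) * hd.T (cs.simple i) = -hd.T (cs.simple i) := by
    intro i
    have := hd.T_mul_of_lt i (cs.simple i)
      (by rw [cs.simple_mul_simple_self]; simp [cs.length_simple])
    simpa using this
  have hsq : ∀ i : B, (hd.T (cs.simple i) + 1) * (hd.T (cs.simple i) + 1)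
      = hd.T (cs.simple i) + 1 := by
    intro i
    rw [add_mul, one_mul, mul_add, mul_one, hTTs i]
    abel
  -- key one-step multiplication lemma
  have key1 : ∀ (i : B) (w : W), (hd.T (cs.simple i) + 1) * c w = c (star (cs.simple i) w) := by
    intro i w
    rcases cs.length_simple_mul w i with hgt | hlt
    · have h : cs.length w < cs.length (cs.simple i * w) := by omega
      rw [hsgt i w h, hcs i w h]
    · have h : cs.length (cs.simple i * w) < cs.length w := by omega
      rw [hslt i w h]
      have h2 : cs.length (cs.simple i * w) < cs.length (cs.simple i * (cs.simple i * w)) := by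
        rw [← mul_assoc, cs.simple_mul_simple_self, one_mul]; exact h
      have hw : c w = (hd.T (cs.simple i) + 1) * c (cs.simple i * w) := by
        have := hcs i (cs.simple i * w) h2
        rwa [← mul_assoc, cs.simple_mul_simple_self, one_mul] at this
      rw [hw, ← mul_assoc, hsq]
  -- the product rule
  have hmul : ∀ x y : W, c x * c y = c (star x y) := by
    have main : ∀ ω : List B, cs.IsReduced ω → ∀ y : W,
        c (cs.wordProd ω) * c y = c (star (cs.wordProd ω) y) := by
      intro ω
      induction ω with
      | nil => intro _ y; simp [hc1, hone]
      | cons i ω ih =>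
        intro hred y
        have hredt : cs.IsReduced ω := by
          have := hred.drop 1
          simpa using this
        have hlen : cs.length (cs.wordProd ω) < cs.length (cs.simple i * cs.wordProd ω) := by
          have h1 : cs.length (cs.wordProd (i :: ω)) = ω.length + 1 := by
            simpa using hred.eq
          rw [cs.wordProd_cons] at h1
          rw [h1, hredt]
          omega
        have hstar : star (cs.simple i) (cs.wordProd ω) = cs.simple i * cs.wordProd ω :=
          hsgt i _ hlen
        rw [cs.wordProd_cons, hcs i _ hlen, mul_assoc, ih hredt y, key1,
          ← hassoc, hstar]
    intro x y
    obtain ⟨ω, hred, rfl⟩ := cs.exists_reduced_word' x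
    exact main ω hred y
  -- triangularity
  set lower : ℕ → Submodule ℤ H :=
    fun n => Submodule.span ℤ (hd.T '' {v | cs.length v < n}) with hlower
  have mul_lower : ∀ (i : B) (n : ℕ) (x : H), x ∈ lower n →
      (hd.T (cs.simple i) + 1) * x ∈ lower (n + 1) := by
    intro i n x hx
    induction hx using Submodule.span_induction with
    | mem x hxmem =>
      obtain ⟨v, hv, rfl⟩ := hxmem
      have hvlt : cs.length v < n := hv
      have hexp : (hd.T (cs.simple i) + 1) * hd.T v
          = hd.T (cs.simple i) * hd.T v + hd.T v := by rw [add_mul, one_mul]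
      rcases cs.length_simple_mul v i with hgt | hlt
      · rw [hexp, hd.T_mul_of_gt i v (by omega)]
        exact Submodule.add_mem _
          (Submodule.subset_span ⟨_, by simp only [Set.mem_setOf_eq]; omega, rfl⟩)
          (Submodule.subset_span ⟨_, by simp only [Set.mem_setOf_eq]; omega, rfl⟩)
      · rw [hexp, hd.T_mul_of_lt i v (by omega)]
        simp
    | zero => simp
    | add x y hx hy ihx ihy => rw [mul_add]; exact Submodule.add_mem _ ihx ihy
    | smul a x hx ihx => rw [mul_smul_comm]; exact Submodule.smul_mem _ _ ihx
  have tri : ∀ ω : List B, cs.IsReduced ω →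
      c (cs.wordProd ω) - hd.T (cs.wordProd ω) ∈ lower ω.length := by
    intro ω
    induction ω with
    | nil => intro _; simp [hc1, hd.T_one]
    | cons i ω ih =>
      intro hred
      have hredt : cs.IsReduced ω := by simpa using hred.drop 1
      have hlen : cs.length (cs.wordProd ω) < cs.length (cs.simple i * cs.wordProd ω) := by
        have h1 : cs.length (cs.wordProd (i :: ω)) = ω.length + 1 := by simpa using hred.eq
        rw [cs.wordProd_cons] at h1
        have hl2 : cs.length (cs.wordProd ω) = ω.length := hredt
        omega
      have hTmul : hd.T (cs.simple i) * hd.T (cs.wordProd ω)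
          = hd.T (cs.simple i * cs.wordProd ω) := hd.T_mul_of_gt i _ hlen
      have hdec : c (cs.wordProd (i :: ω)) - hd.T (cs.wordProd (i :: ω))
          = hd.T (cs.wordProd ω)
            + (hd.T (cs.simple i) + 1) * (c (cs.wordProd ω) - hd.T (cs.wordProd ω)) := by
        rw [cs.wordProd_cons, hcs i _ hlen, ← hTmul]; noncomm_ring
      rw [hdec]
      refine Submodule.add_mem _ ?_ ?_
      · have hl2 : cs.length (cs.wordProd ω) = ω.length := hredt
        exact Submodule.subset_span ⟨_, by
          simp only [Set.mem_setOf_eq, List.length_cons]; omega, rfl⟩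
      · have := mul_lower i ω.length _ (ih hredt)
        simpa using this
  have tri' : ∀ w : W, c w - hd.T w ∈ lower (cs.length w) := by
    intro w
    obtain ⟨ω, hred, rfl⟩ := cs.exists_reduced_word' w
    have hlw : cs.length (cs.wordProd ω) = ω.length := hred
    have := tri ω hred
    rwa [hlw]
  -- coordinates of lower elements vanish at long elements
  have coord0 : ∀ (n : ℕ) (v : W), n ≤ cs.length v → ∀ x ∈ lower n, hd.T.repr x v = 0 := by
    intro n v hnv x hx
    have : lower n ≤ LinearMap.ker ((Finsupp.lapply v).comp hd.T.repr.toLinearMap) := by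
      rw [hlower]
      apply Submodule.span_le.2
      rintro _ ⟨u, hu, rfl⟩
      have hu' : cs.length u < n := hu
      have huv : u ≠ v := fun h => by subst h; omega
      simp [LinearMap.mem_ker, Finsupp.single_apply, huv]
    simpa using this hx
  have reprC : ∀ w v : W, cs.length w ≤ cs.length v →
      hd.T.repr (c w) v = if v = w then 1 else 0 := by
    intro w v hwv
    have heq : c w = (c w - hd.T w) + hd.T w := by abel
    rw [heq, map_add]
    simp only [Finsupp.add_apply]
    rw [coord0 (cs.length w) v hwv _ (tri' w), zero_add, Module.Basis.repr_self,
      Finsupp.single_apply]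
    by_cases h : v = w
    · simp [h]
    · rw [if_neg h, if_neg (Ne.symm h)]
  -- linear independence
  have li : LinearIndependent ℤ c := by
    rw [linearIndependent_iff]
    intro l hl
    by_contra hl0
    obtain ⟨w0, hw0mem, hw0max⟩ :=
      Finset.exists_max_image l.support cs.length (Finsupp.support_nonempty_iff.2 hl0)
    have h0 : hd.T.repr (Finsupp.linearCombination ℤ c l) w0 = 0 := by rw [hl]; simp
    rw [Finsupp.linearCombination_apply, Finsupp.sum, map_sum, Finsupp.finset_sum_apply] at h0
    have heval : ∀ w ∈ l.support, (hd.T.repr (l w • c w)) w0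
        = if w = w0 then l w0 else 0 := by
      intro w hw
      rw [map_smul, Finsupp.smul_apply, reprC w w0 (hw0max w hw)]
      by_cases h : w = w0
      · subst h; simp
      · rw [if_neg (fun hh => h hh.symm), if_neg h, smul_zero]
    rw [Finset.sum_congr rfl heval, Finset.sum_ite_eq' l.support w0 (fun _ => l w0)] at h0
    simp only [hw0mem, if_true] at h0
    exact absurd h0 (Finsupp.mem_support_iff.1 hw0mem)
  -- spanning
  have span_top : ⊤ ≤ Submodule.span ℤ (Set.range c) := by
    have hT0 : ∀ n : ℕ, ∀ w : W, cs.length w < n →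
        hd.T w ∈ Submodule.span ℤ (Set.range c) := by
      intro n
      induction n with
      | zero => intro w hw; omega
      | succ n ih =>
        intro w hw
        have h1 : hd.T w = c w - (c w - hd.T w) := by abel
        rw [h1]
        refine Submodule.sub_mem _ (Submodule.subset_span ⟨w, rfl⟩) ?_
        have hle : lower (cs.length w) ≤ Submodule.span ℤ (Set.range c) := by
          rw [hlower]
          apply Submodule.span_le.2
          rintro _ ⟨u, hu, rfl⟩
          have hu' : cs.length u < cs.length w := hu
          exact ih u (by omega)
        exact hle (tri' w)
    have hT : ∀ w : W, hd.T w ∈ Submodule.span ℤ (Set.range c) :=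
      fun w => hT0 (cs.length w + 1) w (by omega)
    have : Submodule.span ℤ (Set.range hd.T) ≤ Submodule.span ℤ (Set.range c) :=
      Submodule.span_le.2 (by rintro _ ⟨w, rfl⟩; exact hT w)
    rwa [hd.T.span_eq] at this
  let b : Module.Basis W ℤ H := Module.Basis.mk li span_top
  have hb : ∀ w : W, b w = c w := fun w => Module.Basis.mk_apply li span_top w
  have hinj : Function.Injective c := by
    have : c = ⇑b := funext fun w => (hb w).symm
    rw [this]
    exact b.injective
  exact ⟨hc1, hmul, hinj, ⟨b, hb⟩⟩
end

section
/- In the 0-Hecke algebra H_0 of a Coxeter system, for every finitary subset I ⊆ S the element c_{w_I} = Σ_{w ∈ W_I} T_w is an idempotent, where w_I is the longest element of the finite parabolic subgroup W_I. -/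
namespace Stmt15Aux

variable {B W : Type} [Group W] {M : CoxeterMatrix B} {cs : CoxeterSystem M W}
  {H : Type} [Ring H] [Algebra ℤ H] (hd : ZeroHeckeData cs H)

theorem T_simple_sq (i : B) :
    hd.T (cs.simple i) * hd.T (cs.simple i) = -hd.T (cs.simple i) := by
  apply hd.T_mul_of_lt
  rw [cs.simple_mul_simple_self, cs.length_one, cs.length_simple]
  norm_num

/-- Right multiplication rules, proved by joint induction on the length. -/
theorem right_rules : ∀ n : ℕ, ∀ v : W, ∀ i : B, cs.length v = n →
    (cs.length (v * cs.simple i) = n + 1 →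
      hd.T v * hd.T (cs.simple i) = hd.T (v * cs.simple i)) ∧
    (cs.length (v * cs.simple i) + 1 = n →
      hd.T v * hd.T (cs.simple i) = -hd.T v) := by
  intro n
  induction n using Nat.strong_induction_on with
  | _ n ih =>
    intro v i hv
    constructor
    · intro hup
      rcases Nat.eq_zero_or_pos n with rfl | hn
      · have hv1 : v = 1 := cs.length_eq_zero_iff.mp hv
        subst hv1
        rw [hd.T_one, one_mul, one_mul]
      · have hvne : v ≠ 1 := by
          intro h; rw [h, cs.length_one] at hv; omega
        obtain ⟨j, hj⟩ := cs.exists_leftDescent_of_ne_one hvne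
        have hj' : cs.length (cs.simple j * v) + 1 = n := by
          rw [← hv]; exact cs.isLeftDescent_iff.mp hj
        set v' := cs.simple j * v with hv'def
        have hvv : cs.simple j * v' = v := by
          rw [hv'def, cs.simple_mul_simple_cancel_left]
        have hTv : hd.T v = hd.T (cs.simple j) * hd.T v' := by
          rw [hd.T_mul_of_gt j v' (by rw [hvv]; omega), hvv]
        rcases cs.length_mul_simple v' i with hcase | hcase
        · have IH1 := (ih (cs.length v') (by omega) v' i rfl).1
          have h1 : hd.T v' * hd.T (cs.simple i) = hd.T (v' * cs.simple i) :=
            IH1 (by omega)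
          have h2 : hd.T (cs.simple j) * hd.T (v' * cs.simple i)
              = hd.T (cs.simple j * (v' * cs.simple i)) := by
            apply hd.T_mul_of_gt
            rw [← mul_assoc, hvv]
            omega
          rw [hTv, mul_assoc, h1, h2, ← mul_assoc, hvv]
        · exfalso
          have := cs.length_simple_mul (v' * cs.simple i) j
          rw [← mul_assoc, hvv] at this
          rcases this with h | h <;> omega
    · intro hdown
      set u := v * cs.simple i with hudef
      have hu : u * cs.simple i = v := by
        rw [hudef, cs.simple_mul_simple_cancel_right]
      have IH1 := (ih (cs.length u) (by omega) u i rfl).1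
      have h1 : hd.T u * hd.T (cs.simple i) = hd.T (u * cs.simple i) :=
        IH1 (by rw [hu]; omega)
      rw [hu] at h1
      calc hd.T v * hd.T (cs.simple i)
          = (hd.T u * hd.T (cs.simple i)) * hd.T (cs.simple i) := by rw [h1]
        _ = hd.T u * (hd.T (cs.simple i) * hd.T (cs.simple i)) := by rw [mul_assoc]
        _ = hd.T u * (-hd.T (cs.simple i)) := by rw [T_simple_sq]
        _ = -(hd.T u * hd.T (cs.simple i)) := by rw [mul_neg]
        _ = -hd.T v := by rw [h1]

theorem T_mul_simple_of_gt {v : W} {i : B} (h : cs.length (v * cs.simple i) = cs.length v + 1) :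
    hd.T v * hd.T (cs.simple i) = hd.T (v * cs.simple i) :=
  (right_rules hd (cs.length v) v i rfl).1 h

theorem T_mul_simple_of_lt {v : W} {i : B} (h : cs.length (v * cs.simple i) + 1 = cs.length v) :
    hd.T v * hd.T (cs.simple i) = -hd.T v :=
  (right_rules hd (cs.length v) v i rfl).2 h

include hd in
/-- The lifting ("pivot") lemma, proved using the 0-Hecke algebra. -/
theorem pivot {x : W} {i j : B}
    (h1 : cs.length (cs.simple i * x) = cs.length x + 1)
    (h2 : cs.length (x * cs.simple j) = cs.length x + 1)
    (h3 : cs.length (cs.simple i * x * cs.simple j) = cs.length x) :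
    cs.simple i * x = x * cs.simple j := by
  have e1 : hd.T (cs.simple i) * hd.T (x * cs.simple j) = -hd.T (x * cs.simple j) := by
    apply hd.T_mul_of_lt
    rw [← mul_assoc]
    omega
  have e2 : hd.T x * hd.T (cs.simple j) = hd.T (x * cs.simple j) :=
    T_mul_simple_of_gt hd h2
  have e3 : hd.T (cs.simple i) * hd.T x = hd.T (cs.simple i * x) :=
    hd.T_mul_of_gt i x (by omega)
  have e4 : hd.T (cs.simple i * x) * hd.T (cs.simple j) = -hd.T (cs.simple i * x) :=
    T_mul_simple_of_lt hd (by rw [h3, h1])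
  have key : -hd.T (x * cs.simple j) = -hd.T (cs.simple i * x) := by
    rw [← e1, ← e2, ← mul_assoc, e3, e4]
  exact (hd.T.injective (neg_injective key)).symm

include hd in
/-- The (left) exchange property. -/
theorem exchange (ω : List B) : cs.IsReduced ω → ∀ i : B,
    cs.length (cs.simple i * cs.wordProd ω) < cs.length (cs.wordProd ω) →
    ∃ k < ω.length, cs.simple i * cs.wordProd ω = cs.wordProd (ω.eraseIdx k) := by
  induction ω using List.reverseRecOn with
  | nil =>
    intro _ i h
    rw [cs.wordProd_nil, cs.length_one] at h
    omega
  | append_singleton ω' j ihp =>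
    intro hr i hlt
    have hr' : cs.IsReduced ω' := by
      have := hr.take ω'.length
      rwa [List.take_left] at this
    have hw : cs.wordProd (ω' ++ [j]) = cs.wordProd ω' * cs.simple j := by
      rw [cs.wordProd_append, cs.wordProd_singleton]
    have hlen : cs.length (cs.wordProd (ω' ++ [j])) = ω'.length + 1 := by
      rw [hr]; simp
    have hlx : cs.length (cs.wordProd ω') = ω'.length := hr'
    rcases cs.length_simple_mul (cs.wordProd (ω' ++ [j])) i with hv | hv
    · omega
    · -- hv : ℓ (s i * π (ω' ++ [j])) + 1 = ℓ (π (ω' ++ [j]))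
      rcases cs.length_simple_mul (cs.wordProd ω') i with hc | hc
      · -- pivot case
        have hpiv : cs.simple i * cs.wordProd ω' = cs.wordProd ω' * cs.simple j := by
          refine pivot hd hc ?_ ?_
          · rw [← hw]; omega
          · rw [mul_assoc, ← hw, hlx]; omega
        refine ⟨ω'.length, by simp, ?_⟩
        have herase : (ω' ++ [j]).eraseIdx ω'.length = ω' := by
          rw [List.eraseIdx_append_of_length_le (le_refl _)]
          simp
        rw [herase, hw, ← mul_assoc, hpiv, mul_assoc, cs.simple_mul_simple_self, mul_one]
      · -- induction case
        have hlt' : cs.length (cs.simple i * cs.wordProd ω') < cs.length (cs.wordProd ω') := by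
          omega
        obtain ⟨k, hk, heq⟩ := ihp hr' i hlt'
        refine ⟨k, by simp; omega, ?_⟩
        rw [List.eraseIdx_append_of_lt_length hk, hw, ← mul_assoc, heq,
          cs.wordProd_append, cs.wordProd_singleton]

include hd in
/-- Every word has a reduced word with the same product using only its letters. -/
theorem red (ω : List B) : ∃ θ : List B, (∀ x ∈ θ, x ∈ ω) ∧
    cs.wordProd θ = cs.wordProd ω ∧ cs.IsReduced θ := by
  induction ω with
  | nil => exact ⟨[], by simp, rfl, by simp [CoxeterSystem.IsReduced]⟩
  | cons a ω' ih =>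
    obtain ⟨θ', hsub, hπ, hred⟩ := ih
    rcases cs.length_simple_mul (cs.wordProd θ') a with hup | hdown
    · refine ⟨a :: θ', ?_, ?_, ?_⟩
      · intro x hx
        rcases List.mem_cons.mp hx with rfl | hx
        · exact List.mem_cons_self
        · exact List.mem_cons_of_mem _ (hsub x hx)
      · rw [cs.wordProd_cons, cs.wordProd_cons, hπ]
      · show cs.length (cs.wordProd (a :: θ')) = (a :: θ').length
        rw [cs.wordProd_cons, hup, hred]
        simp
    · have hlt : cs.length (cs.simple a * cs.wordProd θ') < cs.length (cs.wordProd θ') := by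
        omega
      obtain ⟨k, hk, heq⟩ := exchange hd θ' hred a hlt
      refine ⟨θ'.eraseIdx k, ?_, ?_, ?_⟩
      · intro x hx
        exact List.mem_cons_of_mem _ (hsub x ((θ'.eraseIdx_sublist k).subset hx))
      · rw [← heq, cs.wordProd_cons, hπ]
      · show cs.length (cs.wordProd (θ'.eraseIdx k)) = (θ'.eraseIdx k).length
        have hl := List.length_eraseIdx_add_one hk
        have hred' : cs.length (cs.wordProd θ') = θ'.length := hred
        rw [← heq]
        omega

/-- Every element of a standard parabolic subgroup has a word over `I`. -/
theorem word_of_mem {I : Set B} {w : W}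
    (hw : w ∈ Subgroup.closure (cs.simple '' I)) :
    ∃ ω : List B, (∀ x ∈ ω, x ∈ I) ∧ cs.wordProd ω = w := by
  induction hw using Subgroup.closure_induction with
  | mem x hx =>
    obtain ⟨i, hi, rfl⟩ := hx
    exact ⟨[i], by simpa using hi, cs.wordProd_singleton i⟩
  | one => exact ⟨[], by simp, cs.wordProd_nil⟩
  | mul x y _ _ ihx ihy =>
    obtain ⟨ωx, hx1, hx2⟩ := ihx
    obtain ⟨ωy, hy1, hy2⟩ := ihy
    refine ⟨ωx ++ ωy, ?_, by rw [cs.wordProd_append, hx2, hy2]⟩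
    intro z hz
    rcases List.mem_append.mp hz with h | h
    · exact hx1 z h
    · exact hy1 z h
  | inv x _ ihx =>
    obtain ⟨ωx, hx1, hx2⟩ := ihx
    refine ⟨ωx.reverse, ?_, by rw [cs.wordProd_reverse, hx2]⟩
    intro z hz
    exact hx1 z (List.mem_reverse.mp hz)

include hd in
/-- Every non-identity element of a standard parabolic subgroup has a left descent in `I`. -/
theorem exists_descent {I : Set B} {w : W}
    (hw : w ∈ Subgroup.closure (cs.simple '' I)) (hne : w ≠ 1) :
    ∃ i ∈ I, cs.length (cs.simple i * w) < cs.length w := by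
  obtain ⟨ω, hsub, hπ⟩ := word_of_mem hw
  obtain ⟨θ, hsub', hπ', hred⟩ := red hd ω
  have hπw : cs.wordProd θ = w := hπ'.trans hπ
  cases θ with
  | nil =>
    exfalso
    rw [cs.wordProd_nil] at hπw
    exact hne hπw.symm
  | cons i θ' =>
    refine ⟨i, hsub i (hsub' i List.mem_cons_self), ?_⟩
    have h1 : cs.simple i * w = cs.wordProd θ' := by
      rw [← hπw, cs.wordProd_cons, cs.simple_mul_simple_cancel_left]
    have h2 : cs.length w = θ'.length + 1 := by
      rw [← hπw, hred]
      simp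
    have h3 := cs.length_wordProd_le θ'
    rw [h1, h2]
    omega

end Stmt15Aux

/-- In the 0-Hecke algebra `H_0` of a Coxeter system, for every
finitary subset `I ⊆ S` the element `c_{w_I} = Σ_{w ∈ W_I} T_w` is an idempotent. -/
theorem stmt15 {B W : Type} [Group W] {M : CoxeterMatrix B} (cs : CoxeterSystem M W)
    (H : Type) [Ring H] [Algebra ℤ H] (hd : ZeroHeckeData cs H)
    (I : Set B)
    (hfin : Set.Finite ((Subgroup.closure (cs.simple '' I) : Subgroup W) : Set W)) :
    (∑ w ∈ hfin.toFinset, hd.T w) * (∑ w ∈ hfin.toFinset, hd.T w)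
      = ∑ w ∈ hfin.toFinset, hd.T w := by
  classical
  set K := Subgroup.closure (cs.simple '' I) with hK
  set F := hfin.toFinset with hF
  set c := ∑ w ∈ F, hd.T w with hc
  have hmem : ∀ w : W, w ∈ F ↔ w ∈ K := by
    intro w; rw [hF, Set.Finite.mem_toFinset]; rfl
  have hsK : ∀ i ∈ I, cs.simple i ∈ K :=
    fun i hi => Subgroup.subset_closure ⟨i, hi, rfl⟩
  -- Pairing lemma: T_{s_i} * c = 0 for i ∈ I.
  have pairing : ∀ i ∈ I, hd.T (cs.simple i) * c = 0 := by
    intro i hi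
    rw [hc, Finset.mul_sum]
    rw [← Finset.sum_filter_add_sum_filter_not F (fun w => cs.IsLeftDescent w i)]
    have hdesc : ∀ w ∈ F.filter (fun w => cs.IsLeftDescent w i),
        hd.T (cs.simple i) * hd.T w = -hd.T w := by
      intro w hw
      exact hd.T_mul_of_lt i w (Finset.mem_filter.mp hw).2
    have hasc : ∀ w ∈ F.filter (fun w => ¬cs.IsLeftDescent w i),
        hd.T (cs.simple i) * hd.T w = hd.T (cs.simple i * w) := by
      intro w hw
      apply hd.T_mul_of_gt
      have h1 := (Finset.mem_filter.mp hw).2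
      have h2 := cs.length_simple_mul_ne w i
      rw [CoxeterSystem.IsLeftDescent, not_lt] at h1
      omega
    rw [Finset.sum_congr rfl hdesc, Finset.sum_congr rfl hasc]
    have hbij : ∑ w ∈ F.filter (fun w => ¬cs.IsLeftDescent w i), hd.T (cs.simple i * w)
        = ∑ w ∈ F.filter (fun w => cs.IsLeftDescent w i), hd.T w := by
      apply Finset.sum_nbij' (fun w => cs.simple i * w) (fun w => cs.simple i * w)
      · intro a ha
        obtain ⟨haF, hna⟩ := Finset.mem_filter.mp ha
        rw [CoxeterSystem.IsLeftDescent, not_lt] at hna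
        have hne := cs.length_simple_mul_ne a i
        refine Finset.mem_filter.mpr ⟨?_, ?_⟩
        · exact (hmem _).mpr (mul_mem (hsK i hi) ((hmem _).mp haF))
        · rw [CoxeterSystem.IsLeftDescent, cs.simple_mul_simple_cancel_left]
          omega
      · intro a ha
        obtain ⟨haF, hna⟩ := Finset.mem_filter.mp ha
        rw [CoxeterSystem.IsLeftDescent] at hna
        refine Finset.mem_filter.mpr ⟨?_, ?_⟩
        · exact (hmem _).mpr (mul_mem (hsK i hi) ((hmem _).mp haF))
        · rw [CoxeterSystem.IsLeftDescent, cs.simple_mul_simple_cancel_left, not_lt]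
          omega
      · intro a _; rw [cs.simple_mul_simple_cancel_left]
      · intro a _; rw [cs.simple_mul_simple_cancel_left]
      · intro a _; rfl
    rw [hbij, ← Finset.sum_add_distrib]
    exact Finset.sum_eq_zero fun x _ => neg_add_cancel _
  -- Main lemma : T_w * c = 0 for w ∈ W_I, w ≠ 1.
  have main : ∀ n : ℕ, ∀ w : W, cs.length w = n → w ∈ K → w ≠ 1 → hd.T w * c = 0 := by
    intro n
    induction n using Nat.strong_induction_on with
    | _ n ih =>
      intro w hlen hw hne
      obtain ⟨i, hiI, hdesc⟩ := Stmt15Aux.exists_descent hd hw hne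
      set u := cs.simple i * w with hudef
      have hu : cs.simple i * u = w := by
        rw [hudef, cs.simple_mul_simple_cancel_left]
      have hTw : hd.T w = hd.T (cs.simple i) * hd.T u := by
        rw [hd.T_mul_of_gt i u (by rw [hu]; exact hdesc), hu]
      by_cases hu1 : u = 1
      · rw [hTw, hu1, hd.T_one, mul_one]
        exact pairing i hiI
      · have huK : u ∈ K := mul_mem (hsK i hiI) hw
        rw [hTw, mul_assoc, ih (cs.length u) (by omega) u rfl huK hu1, mul_zero]
  have h1F : (1 : W) ∈ F := (hmem 1).mpr (one_mem K)
  calc (∑ w ∈ F, hd.T w) * (∑ w ∈ F, hd.T w)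
      = ∑ w ∈ F, hd.T w * c := by rw [Finset.sum_mul]
    _ = hd.T 1 * c := by
        apply Finset.sum_eq_single_of_mem 1 h1F
        intro w hw hne
        exact main (cs.length w) w rfl ((hmem w).mp hw) hne
    _ = ∑ w ∈ F, hd.T w := by rw [hd.T_one, one_mul]
end

section
/- In the 0-Hecke algebra H_0, for any finitary subsets I, J of S, c_{w_I}·c_{w_J} = c_{w_{I,J}}, where w_{I,J} is the longest element of the double coset W_I W_J. -/
open Pointwise
section Aux

variable {B W : Type} [Group W] {M : CoxeterMatrix B} {cs : CoxeterSystem M W}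
    {H : Type} [Ring H] [Algebra ℤ H] {hd : ZeroHeckeData cs H}
    {c : W → H}
    (hc : ∀ (w : W) (ω : List B), cs.wordProd ω = w → cs.IsReduced ω →
      c w = (ω.map (fun i => hd.T (cs.simple i) + 1)).prod)

include hc

theorem aux_c_one : c 1 = 1 := by
  have h := hc 1 [] (by simp) (by simp [CoxeterSystem.IsReduced])
  simpa using h

theorem aux_c_mul (x y : W)
    (h : cs.length (x * y) = cs.length x + cs.length y) :
    c (x * y) = c x * c y := by
  obtain ⟨ωx, hx, rfl⟩ := cs.exists_reduced_word' x
  obtain ⟨ωy, hy, rfl⟩ := cs.exists_reduced_word' y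
  have hred : cs.IsReduced (ωx ++ ωy) := by
    unfold CoxeterSystem.IsReduced at hx hy ⊢
    rw [cs.wordProd_append, h, hx, hy, List.length_append]
  rw [hc _ ωx rfl hx, hc _ ωy rfl hy, ← List.prod_append, ← List.map_append]
  exact hc _ (ωx ++ ωy) (by rw [cs.wordProd_append]) hred

theorem aux_c_simple (i : B) : c (cs.simple i) = hd.T (cs.simple i) + 1 := by
  have h := hc (cs.simple i) [i] (by simp)
    (by simp [CoxeterSystem.IsReduced, cs.length_simple])
  simpa using h

theorem aux_cs_idem (i : B) :
    c (cs.simple i) * c (cs.simple i) = c (cs.simple i) := by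
  have hT : hd.T (cs.simple i) * hd.T (cs.simple i) = -hd.T (cs.simple i) := by
    have := hd.T_mul_of_lt i (cs.simple i)
      (by rw [cs.simple_mul_simple_self, cs.length_one, cs.length_simple]; omega)
    simpa using this
  rw [aux_c_simple hc]
  have expand : (hd.T (cs.simple i) + 1) * (hd.T (cs.simple i) + 1)
      = hd.T (cs.simple i) * hd.T (cs.simple i)
        + (hd.T (cs.simple i) + hd.T (cs.simple i) + 1) := by noncomm_ring
  rw [expand, hT]; abel

/-- Right absorption: if `d·sᵢ` is shorter than `d`, then `c d · c sᵢ = c d`. -/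
theorem aux_cd_cs (d : W) (i : B)
    (h : cs.length (d * cs.simple i) < cs.length d) :
    c d * c (cs.simple i) = c d := by
  set d' := d * cs.simple i with hd'
  have hdd : d = d' * cs.simple i := by
    rw [hd', mul_assoc, cs.simple_mul_simple_self, mul_one]
  have hlen : cs.length (d' * cs.simple i) = cs.length d' + cs.length (cs.simple i) := by
    rw [cs.length_simple, ← hdd]
    rcases cs.length_mul_simple d' i with h1 | h1 <;> rw [← hdd] at h1 <;> omega
  have hmul : c d = c d' * c (cs.simple i) := by
    rw [hdd]; exact aux_c_mul hc d' (cs.simple i) hlen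
  rw [hmul, mul_assoc, aux_cs_idem hc]

/-- Left absorption: if `sᵢ·d` is shorter than `d`, then `c sᵢ · c d = c d`. -/
theorem aux_cs_cd (d : W) (i : B)
    (h : cs.length (cs.simple i * d) < cs.length d) :
    c (cs.simple i) * c d = c d := by
  set d' := cs.simple i * d with hd'
  have hdd : d = cs.simple i * d' := by
    rw [hd', ← mul_assoc, cs.simple_mul_simple_self, one_mul]
  have hlen : cs.length (cs.simple i * d') = cs.length (cs.simple i) + cs.length d' := by
    rw [cs.length_simple, ← hdd]
    rcases cs.length_simple_mul d' i with h1 | h1 <;> rw [← hdd] at h1 <;> omega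
  have hmul : c d = c (cs.simple i) * c d' := by
    rw [hdd]; exact aux_c_mul hc (cs.simple i) d' hlen
  rw [hmul, ← mul_assoc, aux_cs_idem hc]

/-- Master lemma (left version): if every `i ∈ Iset` is a right descent of `d`, then
multiplying the left factor of the second term by an element of the parabolic subgroup
generated by `Iset` does not change `c d * c w`. -/
theorem aux_master_left (d : W) (Iset : Set B)
    (hdesc : ∀ i ∈ Iset, cs.length (d * cs.simple i) < cs.length d)
    (a : W) (ha : a ∈ Subgroup.closure (cs.simple '' Iset)) :
    ∀ w : W, c d * c (a * w) = c d * c w := by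
  induction ha using Subgroup.closure_induction with
  | mem x hx =>
    obtain ⟨i, hi, rfl⟩ := hx
    intro w
    rcases Nat.lt_or_gt_of_ne (cs.length_simple_mul_ne w i) with hlt | hgt
    · -- ℓ(sᵢ w) < ℓ w : write w = sᵢ · (sᵢ w), length-additively
      set w' := cs.simple i * w with hw'
      have hww : w = cs.simple i * w' := by
        rw [hw', ← mul_assoc, cs.simple_mul_simple_self, one_mul]
      have hlen : cs.length (cs.simple i * w')
          = cs.length (cs.simple i) + cs.length w' := by
        rw [cs.length_simple, ← hww]
        rcases cs.length_simple_mul w' i with h1 | h1 <;> rw [← hww] at h1 <;> omega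
      have : c w = c (cs.simple i) * c w' := by
        rw [hww]; exact aux_c_mul hc _ _ hlen
      rw [this, ← mul_assoc, aux_cd_cs hc d i (hdesc i hi)]
    · -- ℓ(sᵢ w) > ℓ w
      have hlen : cs.length (cs.simple i * w)
          = cs.length (cs.simple i) + cs.length w := by
        rw [cs.length_simple]
        rcases cs.length_simple_mul w i with h1 | h1 <;> omega
      rw [aux_c_mul hc _ _ hlen, ← mul_assoc, aux_cd_cs hc d i (hdesc i hi)]
  | one => intro w; rw [one_mul]
  | mul x y hx hy px py =>
    intro w
    rw [mul_assoc, px (y * w), py w]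
  | inv x hx px =>
    intro w
    have := px (x⁻¹ * w)
    rw [← mul_assoc, mul_inv_cancel, one_mul] at this
    exact this.symm

/-- Master lemma (right version): if every `j ∈ Jset` is a left descent of `d`, then
multiplying the right factor of the first term by an element of the parabolic subgroup
generated by `Jset` does not change `c w * c d`. -/
theorem aux_master_right (d : W) (Jset : Set B)
    (hdesc : ∀ j ∈ Jset, cs.length (cs.simple j * d) < cs.length d)
    (a : W) (ha : a ∈ Subgroup.closure (cs.simple '' Jset)) :
    ∀ w : W, c (w * a) * c d = c w * c d := by
  induction ha using Subgroup.closure_induction with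
  | mem x hx =>
    obtain ⟨j, hj, rfl⟩ := hx
    intro w
    rcases Nat.lt_or_gt_of_ne (cs.length_mul_simple_ne w j) with hlt | hgt
    · set w' := w * cs.simple j with hw'
      have hww : w = w' * cs.simple j := by
        rw [hw', mul_assoc, cs.simple_mul_simple_self, mul_one]
      have hlen : cs.length (w' * cs.simple j)
          = cs.length w' + cs.length (cs.simple j) := by
        rw [cs.length_simple, ← hww]
        rcases cs.length_mul_simple w' j with h1 | h1 <;> rw [← hww] at h1 <;> omega
      have : c w = c w' * c (cs.simple j) := by
        rw [hww]; exact aux_c_mul hc _ _ hlen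
      conv_rhs => rw [this]
      rw [mul_assoc, aux_cs_cd hc d j (hdesc j hj)]
    · have hlen : cs.length (w * cs.simple j)
          = cs.length w + cs.length (cs.simple j) := by
        rw [cs.length_simple]
        rcases cs.length_mul_simple w j with h1 | h1 <;> omega
      rw [aux_c_mul hc _ _ hlen, mul_assoc, aux_cs_cd hc d j (hdesc j hj)]
  | one => intro w; rw [mul_one]
  | mul x y hx hy px py =>
    intro w
    rw [← mul_assoc, py (w * x), px w]
  | inv x hx px =>
    intro w
    have := px (w * x⁻¹)
    rw [mul_assoc, inv_mul_cancel, mul_one] at this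
    exact this.symm

end Aux

/-- In the 0-Hecke algebra `H_0`, for finitary subsets `I, J ⊆ S`,
`c_{w_I} · c_{w_J} = c_{w_{I,J}}`, where `w_I, w_J` are the longest elements of the
finite parabolic subgroups `W_I, W_J` and `w_{I,J}` is the longest element of the
double coset `W_I W_J`.  Here `c_w` is defined via reduced expressions. -/
theorem stmt16 {B W : Type} [Group W] {M : CoxeterMatrix B} (cs : CoxeterSystem M W)
    (H : Type) [Ring H] [Algebra ℤ H] (hd : ZeroHeckeData cs H)
    (c : W → H)
    (hc : ∀ (w : W) (ω : List B), cs.wordProd ω = w → cs.IsReduced ω →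
      c w = (ω.map (fun i => hd.T (cs.simple i) + 1)).prod)
    (I J : Set B)
    (WI WJ : Subgroup W)
    (hWI : WI = Subgroup.closure (cs.simple '' I))
    (hWJ : WJ = Subgroup.closure (cs.simple '' J))
    (hfinI : Set.Finite (WI : Set W)) (hfinJ : Set.Finite (WJ : Set W))
    (wI wJ wIJ : W)
    (hwI : wI ∈ WI ∧ ∀ u ∈ WI, cs.length u ≤ cs.length wI)
    (hwJ : wJ ∈ WJ ∧ ∀ u ∈ WJ, cs.length u ≤ cs.length wJ)
    (hwIJ : wIJ ∈ (WI : Set W) * (WJ : Set W) ∧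
      ∀ u ∈ (WI : Set W) * (WJ : Set W), cs.length u ≤ cs.length wIJ) :
    c wI * c wJ = c wIJ := by
  -- simple reflections indexed by `I` (resp. `J`) lie in `WI` (resp. `WJ`)
  have hsimpI : ∀ i ∈ I, cs.simple i ∈ WI := fun i hi =>
    hWI ▸ Subgroup.subset_closure ⟨i, hi, rfl⟩
  have hsimpJ : ∀ j ∈ J, cs.simple j ∈ WJ := fun j hj =>
    hWJ ▸ Subgroup.subset_closure ⟨j, hj, rfl⟩
  -- every `i ∈ I` is a right descent of `wI`
  have dI : ∀ i ∈ I, cs.length (wI * cs.simple i) < cs.length wI := by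
    intro i hi
    have hle := hwI.2 _ (mul_mem hwI.1 (hsimpI i hi))
    have hne := cs.length_mul_simple_ne wI i
    omega
  -- every `j ∈ J` is a left descent of `wJ`
  have dJ : ∀ j ∈ J, cs.length (cs.simple j * wJ) < cs.length wJ := by
    intro j hj
    have hle := hwJ.2 _ (mul_mem (hsimpJ j hj) hwJ.1)
    have hne := cs.length_simple_mul_ne wJ j
    omega
  -- membership of `wIJ` in the double coset
  obtain ⟨a, haI, b, hbJ, hab0⟩ := hwIJ.1
  have hab : a * b = wIJ := hab0
  -- every `i ∈ I` is a left descent of `wIJ`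
  have dIJl : ∀ i ∈ I, cs.length (cs.simple i * wIJ) < cs.length wIJ := by
    intro i hi
    have hmem : cs.simple i * wIJ ∈ (WI : Set W) * (WJ : Set W) := by
      rw [← hab, ← mul_assoc]
      exact Set.mul_mem_mul (mul_mem (hsimpI i hi) haI) hbJ
    have hle := hwIJ.2 _ hmem
    have hne := cs.length_simple_mul_ne wIJ i
    omega
  -- every `j ∈ J` is a right descent of `wIJ`
  have dIJr : ∀ j ∈ J, cs.length (wIJ * cs.simple j) < cs.length wIJ := by
    intro j hj
    have hmem : wIJ * cs.simple j ∈ (WI : Set W) * (WJ : Set W) := by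
      rw [← hab, mul_assoc]
      exact Set.mul_mem_mul haI (mul_mem hbJ (hsimpJ j hj))
    have hle := hwIJ.2 _ hmem
    have hne := cs.length_mul_simple_ne wIJ j
    omega
  have hone : c (1 : W) = 1 := aux_c_one hc
  -- left-multiplying inside `c wI * c ·` by `a ∈ WI` is invisible
  have habs1 : c wI * c (a * b) = c wI * c b :=
    aux_master_left hc wI I dI a (hWI ▸ haI) b
  -- `c b * c wJ = c wJ`, since `b ∈ WJ`
  have habs2 : c b * c wJ = c wJ := by
    have := aux_master_right hc wJ J dJ b (hWJ ▸ hbJ) 1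
    rwa [one_mul, hone, one_mul] at this
  -- `c wI * c wIJ = c wIJ`, since `wI ∈ WI` and all of `I` are left descents of `wIJ`
  have habs3 : c wI * c wIJ = c wIJ := by
    have := aux_master_right hc wIJ I dIJl wI (hWI ▸ hwI.1) 1
    rwa [one_mul, hone, one_mul] at this
  -- `c wIJ * c wJ = c wIJ`, since `wJ ∈ WJ` and all of `J` are right descents of `wIJ`
  have habs4 : c wIJ * c wJ = c wIJ := by
    have := aux_master_left hc wIJ J dIJr wJ (hWJ ▸ hwJ.1) 1
    rwa [mul_one, hone, mul_one] at this
  calc c wI * c wJ = c wI * (c b * c wJ) := by rw [habs2]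
    _ = (c wI * c (a * b)) * c wJ := by rw [habs1, mul_assoc]
    _ = (c wI * c wIJ) * c wJ := by rw [hab]
    _ = c wIJ * c wJ := by rw [habs3]
    _ = c wIJ := habs4
end

section
/- In the Hecke monoid (W,*) of a Coxeter system, if I, J, K are finitary subsets of S, x is the longest element of its double coset W_I x W_J and y is the longest element of its double coset W_J y W_K, then x * y is the longest element of the double coset W_I (x*y) W_K. -/
open Pointwise

namespace Stmt17Aux

open CoxeterSystem List Classical

variable {B W : Type} [Group W] {M : CoxeterMatrix B} (cs : CoxeterSystem M W)

local prefix:100 "s" => cs.simple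
local prefix:100 "π" => cs.wordProd
local prefix:100 "ℓ" => cs.length
local prefix:100 "ris" => cs.rightInvSeq

noncomputable section

set_option linter.unusedSectionVars false

lemma count_cons_eq (x : W) (l : List W) (t : W) :
    (x :: l).count t = (if t = x then 1 else 0) + l.count t := by
  rw [List.count_cons]
  by_cases h : t = x
  · rw [if_pos h, if_pos (beq_iff_eq.mpr h.symm)]; omega
  · rw [if_neg h, if_neg (by simpa using fun hh => h hh.symm)]; omega

/-- The basic permutation of `W × Bool` attached to a simple reflection. -/
def etaFun (i : B) : W × Bool → W × Bool :=
  fun p => (s i * p.1 * s i, xor (decide (p.1 = s i)) p.2)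

lemma etaFun_invol (i : B) : Function.Involutive (etaFun cs i) := by
  rintro ⟨t, e⟩
  simp only [etaFun, Prod.mk.injEq]
  refine ⟨?_, ?_⟩
  · simp [mul_assoc, cs.simple_mul_simple_cancel_left, cs.simple_mul_simple_cancel_right]
  · have h : (s i * t * s i = s i) ↔ (t = s i) := by
      constructor
      · intro h
        have := congrArg (fun w => s i * w * s i) h
        simpa [mul_assoc, cs.simple_mul_simple_cancel_left,
          cs.simple_mul_simple_cancel_right] using this
      · rintro rfl; simp [cs.simple_mul_simple_self]
    simp only [h]
    cases e <;> cases (Classical.dec (t = s i)).decide <;> simp_all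

def eta (i : B) : Equiv.Perm (W × Bool) := (etaFun_invol cs i).toPerm

lemma eta_apply (i : B) (t : W) (e : Bool) :
    eta cs i (t, e) = (s i * t * s i, xor (decide (t = s i)) e) := rfl

/-- master computation: applying a product of `eta`s. -/
lemma prod_eta_apply (ω : List B) (t : W) (e : Bool) :
    (ω.map (eta cs)).prod (t, e) =
      (π ω * t * (π ω)⁻¹, xor (decide ((ris ω).count t % 2 = 1)) e) := by
  induction ω generalizing t e with
  | nil => simp
  | cons i ω ih =>
    have hsplit : ((i :: ω).map (eta cs)).prod = eta cs i * (ω.map (eta cs)).prod := by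
      simp
    rw [hsplit]
    simp only [Equiv.Perm.mul_apply]
    rw [ih, eta_apply]
    simp only [Prod.mk.injEq]
    refine ⟨?_, ?_⟩
    · rw [cs.wordProd_cons, mul_inv_rev, cs.inv_simple]
      group
    · rw [← Bool.xor_assoc]
      congr 1
      have hcount : (ris (i :: ω)).count t
          = (if t = (π ω)⁻¹ * s i * π ω then 1 else 0) + (ris ω).count t := by
        show ((((π ω)⁻¹ * s i * π ω)) :: ris ω).count t = _
        rw [count_cons_eq]
      have hiff : (π ω * t * (π ω)⁻¹ = s i) ↔ (t = (π ω)⁻¹ * s i * π ω) := by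
        constructor
        · intro h; rw [← h]; group
        · intro h; rw [h]; group
      rw [hcount]
      by_cases h : t = (π ω)⁻¹ * s i * π ω
      · have hP : decide (π ω * t * (π ω)⁻¹ = s i) = true := decide_eq_true (hiff.mpr h)
        rw [if_pos h, hP]
        rcases Nat.even_or_odd ((ris ω).count t) with he | ho
        · rw [Nat.even_iff] at he
          rw [decide_eq_false (by omega : ¬ ((ris ω).count t % 2 = 1)),
            decide_eq_true (by omega : (1 + (ris ω).count t) % 2 = 1)]
          rfl
        · rw [Nat.odd_iff] at ho
          rw [decide_eq_true ho,
            decide_eq_false (by omega : ¬ ((1 + (ris ω).count t) % 2 = 1))]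
          rfl
      · have hP : decide (π ω * t * (π ω)⁻¹ = s i) = false :=
          decide_eq_false (fun hh => h (hiff.mp hh))
        rw [if_neg h, hP, Bool.false_xor, Nat.zero_add]

/-- alternating list `[i, j, i, j, ...]` of length `2m`. -/
def lrep (i j : B) : ℕ → List B
  | 0 => []
  | (m+1) => i :: j :: lrep i j m

lemma prod_eta_lrep (i j : B) (m : ℕ) :
    ((eta cs i) * (eta cs j)) ^ m = ((lrep i j m).map (eta cs)).prod := by
  induction m with
  | zero => simp [lrep]
  | succ m ih => rw [pow_succ', ih, lrep]; simp [mul_assoc]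

lemma wordProd_lrep (i j : B) (m : ℕ) : π (lrep i j m) = (s i * s j) ^ m := by
  induction m with
  | zero => simp [lrep]
  | succ m ih =>
    rw [lrep, cs.wordProd_cons, cs.wordProd_cons, ih, pow_succ']
    group

lemma simple_mul_pow (i j : B) (k : ℕ) :
    s j * (s i * s j) ^ k = ((s i * s j) ^ k)⁻¹ * s j := by
  induction k with
  | zero => simp
  | succ k ih =>
    rw [pow_succ', ← mul_assoc, mul_inv_rev]
    have hbase : s j * (s i * s j) = (s i * s j)⁻¹ * s j := by
      rw [mul_inv_rev, cs.inv_simple, cs.inv_simple]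
      simp [mul_assoc, cs.simple_mul_simple_cancel_left, cs.simple_mul_simple_self]
    rw [hbase, mul_assoc, ih, ← mul_assoc]
    have hc : (s i * s j)⁻¹ * ((s i * s j) ^ k)⁻¹ = ((s i * s j) ^ k)⁻¹ * (s i * s j)⁻¹ := by
      rw [← mul_inv_rev, ← mul_inv_rev, ← pow_succ, ← pow_succ']
    rw [hc]

lemma pow_conj_entry2 (i j : B) (m : ℕ) :
    ((s i * s j) ^ m)⁻¹ * s j * ((s i * s j) ^ m) = ((s i * s j) ^ (2*m))⁻¹ * s j := by
  rw [mul_assoc, simple_mul_pow cs i j m, ← mul_assoc, ← mul_inv_rev, ← pow_add, two_mul]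

lemma pow_conj_entry1 (i j : B) (m : ℕ) :
    (s j * (s i * s j) ^ m)⁻¹ * s i * (s j * (s i * s j) ^ m)
      = ((s i * s j) ^ (2*m+1))⁻¹ * s j := by
  have h1 : s j * s i * s j = (s i * s j)⁻¹ * s j := by
    rw [mul_inv_rev, cs.inv_simple, cs.inv_simple, mul_assoc]
  calc (s j * (s i * s j) ^ m)⁻¹ * s i * (s j * (s i * s j) ^ m)
      = ((s i * s j) ^ m)⁻¹ * (s j * s i * s j) * (s i * s j) ^ m := by
        rw [mul_inv_rev, cs.inv_simple]; group
    _ = ((s i * s j) ^ m)⁻¹ * ((s i * s j)⁻¹ * (s j * (s i * s j) ^ m)) := by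
        rw [h1]; group
    _ = ((s i * s j) ^ m)⁻¹ * ((s i * s j)⁻¹ * (((s i * s j) ^ m)⁻¹ * s j)) := by
        rw [simple_mul_pow cs i j m]
    _ = (((s i * s j) ^ m)⁻¹ * (s i * s j)⁻¹) * ((s i * s j) ^ m)⁻¹ * s j := by
        group
    _ = ((s i * s j) ^ (m+1))⁻¹ * ((s i * s j) ^ m)⁻¹ * s j := by
        rw [← mul_inv_rev, ← pow_succ']
    _ = ((s i * s j) ^ m * (s i * s j) ^ (m+1))⁻¹ * s j := by
        rw [mul_inv_rev]
    _ = ((s i * s j) ^ (2*m+1))⁻¹ * s j := by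
        rw [← pow_add, show m + (m+1) = 2*m+1 by omega]

lemma count_ris_lrep (i j : B) (m : ℕ) (t : W) :
    ((ris (lrep i j m)).count t)
      = ∑ d ∈ Finset.range (2 * m), (if t = ((s i * s j) ^ d)⁻¹ * s j then 1 else 0) := by
  induction m with
  | zero => simp [lrep, CoxeterSystem.rightInvSeq]
  | succ m ih =>
    have hris : ris (lrep i j (m+1)) =
        ((π (j :: lrep i j m))⁻¹ * s i * π (j :: lrep i j m)) ::
        ((π (lrep i j m))⁻¹ * s j * π (lrep i j m)) :: ris (lrep i j m) := rfl
    rw [hris, count_cons_eq, count_cons_eq, ih]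
    have he1 : (π (j :: lrep i j m))⁻¹ * s i * π (j :: lrep i j m)
        = ((s i * s j) ^ (2*m+1))⁻¹ * s j := by
      rw [cs.wordProd_cons, wordProd_lrep]
      exact pow_conj_entry1 cs i j m
    have he2 : (π (lrep i j m))⁻¹ * s j * π (lrep i j m)
        = ((s i * s j) ^ (2*m))⁻¹ * s j := by
      rw [wordProd_lrep]
      exact pow_conj_entry2 cs i j m
    have hr : 2 * (m+1) = (2*m + 1) + 1 := by omega
    rw [he1, he2, hr, Finset.sum_range_succ, Finset.sum_range_succ]
    omega

lemma even_count_ris_lrep (i j : B) (t : W) (h : (s i * s j) ^ (M i j) = 1) :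
    ¬ ((ris (lrep i j (M i j))).count t % 2 = 1) := by
  rw [count_ris_lrep]
  set m := M.M i j with hm
  have hper : ∀ d, ((s i * s j) ^ (d + m))⁻¹ * s j = ((s i * s j) ^ d)⁻¹ * s j := by
    intro d
    rw [pow_add, h, mul_one]
  have hsplit : ∑ d ∈ Finset.range (2 * m), (if t = ((s i * s j) ^ d)⁻¹ * s j then 1 else 0)
      = 2 * ∑ d ∈ Finset.range m, (if t = ((s i * s j) ^ d)⁻¹ * s j then (1:ℕ) else 0) := by
    have h2m : 2 * m = m + m := by omega
    rw [h2m, Finset.sum_range_add]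
    have heq : ∀ d ∈ Finset.range m,
        (if t = ((s i * s j) ^ (m + d))⁻¹ * s j then (1:ℕ) else 0)
          = (if t = ((s i * s j) ^ d)⁻¹ * s j then 1 else 0) := by
      intro d _
      rw [show m + d = d + m by omega, hper d]
    rw [Finset.sum_congr rfl heq]
    omega
  rw [hsplit]
  omega

lemma eta_liftable : M.IsLiftable (eta cs) := by
  intro i j
  refine Equiv.ext ?_
  rintro ⟨t, e⟩
  have : ((eta cs i * eta cs j) ^ (M i j)) (t, e) = (t, e) := by
    rw [prod_eta_lrep cs i j (M i j), prod_eta_apply, wordProd_lrep,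
      cs.simple_mul_simple_pow i j,
      decide_eq_false (even_count_ris_lrep cs i j t (cs.simple_mul_simple_pow i j))]
    simp
  simpa using this

/-- The reflection representation on `W × Bool`. -/
def phi : W →* Equiv.Perm (W × Bool) := cs.lift ⟨eta cs, eta_liftable cs⟩

lemma phi_simple (i : B) : phi cs (s i) = eta cs i :=
  cs.lift_apply_simple (eta_liftable cs) i

lemma phi_wordProd (ω : List B) : phi cs (π ω) = (ω.map (eta cs)).prod := by
  induction ω with
  | nil => simp [cs.wordProd_nil]
  | cons i ω ih =>
    rw [cs.wordProd_cons, map_mul, phi_simple, ih]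
    simp

/-- The sign-flip bit. `FB cs w t = true` iff `t` "is a right inversion of `w`"
in the sense of the reflection representation. -/
def FB (w t : W) : Bool := ((phi cs w) (t, false)).2

lemma phi_apply (w t : W) (e : Bool) :
    phi cs w (t, e) = (w * t * w⁻¹, xor (FB cs w t) e) := by
  obtain ⟨ω, rfl⟩ := cs.wordProd_surjective w
  rw [phi_wordProd, prod_eta_apply, FB, phi_wordProd, prod_eta_apply]
  simp

lemma FB_count (ω : List B) (t : W) :
    FB cs (π ω) t = decide ((ris ω).count t % 2 = 1) := by
  rw [FB, phi_wordProd, prod_eta_apply]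
  simp

lemma FB_mem {w t : W} (h : FB cs w t = true) {ω : List B} (hω : π ω = w) :
    t ∈ ris ω := by
  subst hω
  rw [FB_count] at h
  have : (ris ω).count t ≠ 0 := by
    intro h0
    rw [h0] at h
    simp at h
  exact List.count_pos_iff.mp (Nat.pos_of_ne_zero this)

lemma FB_mul (u v t : W) :
    FB cs (u * v) t = xor (FB cs v t) (FB cs u (v * t * v⁻¹)) := by
  have : phi cs (u * v) (t, false) = phi cs u (phi cs v (t, false)) := by
    rw [map_mul]; rfl
  rw [FB, this, phi_apply, phi_apply]
  simp [FB, Bool.xor_comm]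

lemma FB_refl_self {t : W} (ht : cs.IsReflection t) : FB cs t t = true := by
  obtain ⟨u, j, rfl⟩ := ht
  set t := u * s j * u⁻¹ with hts
  have key : xor (FB cs u⁻¹ t) (FB cs u (s j)) = false := by
    have h1 : phi cs u (s j, false) = (t, FB cs u (s j)) := by
      rw [phi_apply]
      simp [hts]
    have h2 : phi cs u⁻¹ (t, FB cs u (s j)) = (s j, false) := by
      have : phi cs u⁻¹ (phi cs u (s j, false)) = (s j, false) := by
        have hh : phi cs u⁻¹ * phi cs u = 1 := by
          rw [← map_mul]; simp
        calc phi cs u⁻¹ (phi cs u (s j, false))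
            = (phi cs u⁻¹ * phi cs u) (s j, false) := rfl
          _ = (s j, false) := by rw [hh]; rfl
      rwa [h1] at this
    rw [phi_apply] at h2
    have := congrArg Prod.snd h2
    simpa using this
  have hsj : FB cs (s j) (s j) = true := by
    have : π [j] = s j := by simp
    rw [← this, FB_count]
    have : ris [j] = [s j] := by
      show ((π ([] : List B))⁻¹ * s j * π ([] : List B)) :: ris ([] : List B) = [s j]
      simp
    rw [this]
    simp
  -- t = (u * s j) * u⁻¹
  have hdecomp : t = (u * s j) * u⁻¹ := by rw [hts, mul_assoc]
  rw [hdecomp, FB_mul]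
  have ht2 : u⁻¹ * t * u⁻¹⁻¹ = s j := by rw [hts]; group
  rw [show u⁻¹ * t * u⁻¹⁻¹ = s j from ht2] -- careful: the FB_mul produced FB cs u⁻¹ t and FB cs (u * s j) (u⁻¹ * t * u⁻¹⁻¹)
  rw [FB_mul]
  rw [hsj]
  -- goal: xor (FB cs u⁻¹ t) (xor true (FB cs u (s j * s j * (s j)⁻¹))) = true
  have hsjj : s j * s j * (s j)⁻¹ = s j := by group
  rw [hsjj]
  rcases hb : FB cs u (s j) with _ | _ <;> rcases hb2 : FB cs u⁻¹ t with _ | _ <;>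
    simp_all


lemma lt_of_FB {w t : W} (h : FB cs w t = true) : ℓ (w * t) < ℓ w := by
  obtain ⟨ω, hred, hw⟩ := cs.exists_reduced_word' w
  have ht : t ∈ ris ω := FB_mem cs h hw.symm
  have := cs.isRightInversion_of_mem_rightInvSeq hred ht
  rw [← hw] at this
  exact this.2

/-- Strong exchange direction: right inversions flip the sign. -/
lemma FB_of_lt {w t : W} (ht : cs.IsReflection t) (h : ℓ (w * t) < ℓ w) :
    FB cs w t = true := by
  by_contra hno
  rw [Bool.not_eq_true] at hno
  have hFB : FB cs (w * t) t = true := by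
    rw [FB_mul]
    have h1 : t * t * t⁻¹ = t := by
      rw [ht.inv, mul_assoc, ht.mul_self, mul_one]
    rw [h1, hno, FB_refl_self cs ht]
    rfl
  have := lt_of_FB cs hFB
  rw [mul_assoc, ht.mul_self, mul_one] at this
  omega

/-- The finset of flipped reflections has cardinality `ℓ w`. -/
lemma exists_flip_finset (w : W) :
    ∃ Φ : Finset W, Φ.card = ℓ w ∧ ∀ t, t ∈ Φ ↔ FB cs w t = true := by
  obtain ⟨ω, hred, hw⟩ := cs.exists_reduced_word' w
  refine ⟨(ris ω).toFinset, ?_, ?_⟩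
  · rw [List.toFinset_card_of_nodup (hred.nodup_rightInvSeq), cs.length_rightInvSeq, hw]
    exact hred.symm ▸ rfl
  · intro t
    rw [List.mem_toFinset]
    constructor
    · intro hmem
      rw [hw, FB_count]
      rw [List.count_eq_one_of_mem (hred.nodup_rightInvSeq) hmem]
      simp
    · intro h
      exact FB_mem cs h hw.symm


lemma ris_append (w1 w2 : List B) :
    ris (w1 ++ w2) = (ris w1).map (fun t => (π w2)⁻¹ * t * π w2) ++ ris w2 := by
  induction w1 with
  | nil => simp [CoxeterSystem.rightInvSeq]
  | cons i w1 ih =>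
    show ((π (w1 ++ w2))⁻¹ * s i * π (w1 ++ w2)) :: ris (w1 ++ w2) = _
    rw [ih, cs.wordProd_append]
    rw [show ris (i :: w1) = ((π w1)⁻¹ * s i * π w1) :: ris w1 from rfl]
    simp only [List.map, List.cons_append]
    congr 1
    rw [mul_inv_rev]; group

lemma mem_ris_getD {t : W} {ω : List B} (h : t ∈ ris ω) :
    ∃ j < ω.length, (ris ω).getD j 1 = t := by
  obtain ⟨j, hj, hget⟩ := List.mem_iff_getElem.mp h
  rw [cs.length_rightInvSeq] at hj
  refine ⟨j, hj, ?_⟩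
  rw [List.getD_eq_getElem _ 1 (by rw [cs.length_rightInvSeq]; exact hj)]
  exact hget

/-- Words with letters in `K`. -/
def KWord (K : Set B) (m : List B) : Prop := ∀ b ∈ m, b ∈ K

lemma wordProd_mem_closure {K : Set B} {m : List B} (hm : KWord K m) :
    π m ∈ Subgroup.closure (cs.simple '' K) := by
  induction m with
  | nil =>
    rw [cs.wordProd_nil]
    exact one_mem _
  | cons i m ih =>
    rw [cs.wordProd_cons]
    exact mul_mem (Subgroup.subset_closure ⟨i, hm i (by simp), rfl⟩)
      (ih (fun b hb => hm b (by simp [hb])))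

lemma exists_word_of_mem_closure {K : Set B} {a : W}
    (ha : a ∈ Subgroup.closure (cs.simple '' K)) :
    ∃ m : List B, KWord K m ∧ π m = a := by
  induction ha using Subgroup.closure_induction with
  | mem x hx =>
    obtain ⟨k, hk, rfl⟩ := hx
    refine ⟨[k], ?_, by simp⟩
    intro b hb
    simp only [List.mem_singleton] at hb
    subst hb
    exact hk
  | one => exact ⟨[], fun b hb => absurd hb List.not_mem_nil, by simp⟩
  | mul x y _ _ ihx ihy =>
    obtain ⟨mx, hmx, rfl⟩ := ihx
    obtain ⟨my, hmy, rfl⟩ := ihy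
    refine ⟨mx ++ my, ?_, by rw [cs.wordProd_append]⟩
    intro b hb
    rcases List.mem_append.mp hb with h | h
    · exact hmx b h
    · exact hmy b h
  | inv x _ ihx =>
    obtain ⟨mx, hmx, rfl⟩ := ihx
    exact ⟨mx.reverse, fun b hb => hmx b (List.mem_reverse.mp hb), by simp⟩

lemma ris_KWord_refl {K : Set B} {m : List B} (hm : KWord K m) {t : W} (ht : t ∈ ris m) :
    ∃ d ∈ Subgroup.closure (cs.simple '' K), ∃ k ∈ K, t = d * s k * d⁻¹ := by
  induction m with
  | nil => simp [CoxeterSystem.rightInvSeq] at ht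
  | cons i m ih =>
    have hcons : ris (i :: m) = ((π m)⁻¹ * s i * π m) :: ris m := rfl
    rw [hcons] at ht
    rcases List.mem_cons.mp ht with heq | hmem
    · refine ⟨(π m)⁻¹, inv_mem (wordProd_mem_closure cs (fun b hb => hm b (by simp [hb]))),
        i, hm i (by simp), by rw [heq]; group⟩
    · exact ih (fun b hb => hm b (by simp [hb])) hmem

/-- Key coset lemma: lengths add over a minimal coset representative. -/
lemma coset_additivity {K : Set B} {z0 : W}
    (hmin : ∀ c ∈ Subgroup.closure (cs.simple '' K), ℓ z0 ≤ ℓ (z0 * c)) :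
    ∀ c ∈ Subgroup.closure (cs.simple '' K), ℓ (z0 * c) = ℓ z0 + ℓ c := by
  have main : ∀ n (m : List B), m.length ≤ n → KWord K m →
      ℓ (z0 * π m) = ℓ z0 + ℓ (π m) := by
    intro n
    induction n with
    | zero =>
      intro m hlen _
      have hm0 : m = [] := List.length_eq_zero_iff.mp (by omega)
      subst hm0
      simp
    | succ n ih =>
      intro m hlen hK
      by_cases hsh : ∃ m', m'.length < m.length ∧ KWord K m' ∧ π m' = π m
      · obtain ⟨m', h1, h2, h3⟩ := hsh
        rw [← h3]
        exact ih m' (by omega) h2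
      · rcases List.eq_nil_or_concat' m with rfl | ⟨mb, k, rfl⟩
        · simp
        · have hKb : KWord K mb := fun b hb => hK b (by simp [hb])
          have hkK : k ∈ K := hK k (by simp)
          have hlenb : mb.length ≤ n := by
            have := hlen
            simp only [List.length_append, List.length_singleton] at this
            omega
          have hb := ih mb hlenb hKb
          have hπ : π (mb ++ [k]) = π mb * s k := by
            rw [cs.wordProd_append]
            simp
          have hstep : ℓ (z0 * π mb * s k) = ℓ (z0 * π mb) + 1 := by
            rcases cs.length_mul_simple (z0 * π mb) k with h | h
            · exact h
            · exfalso
              have hFB : FB cs (z0 * π mb) (s k) = true :=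
                FB_of_lt cs (cs.isReflection_simple k) (by omega)
              obtain ⟨ζ, hζred, hζ⟩ := cs.exists_reduced_word' z0
              have hword : π (ζ ++ mb) = z0 * π mb := by rw [cs.wordProd_append, ← hζ]
              have hmem := FB_mem cs hFB hword
              rw [ris_append] at hmem
              rcases List.mem_append.mp hmem with hin | hin
              · -- conjugate of an inversion of z0 : contradicts minimality
                obtain ⟨t, htris, hteq⟩ := List.mem_map.mp hin
                obtain ⟨j, hj, hgd⟩ := mem_ris_getD cs htris
                have herase : z0 * t = π (ζ.eraseIdx j) := by
                  rw [← hgd, hζ]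
                  exact cs.wordProd_mul_getD_rightInvSeq ζ j
                have hlt : ℓ (z0 * t) < ℓ z0 := by
                  rw [herase]
                  have h1 : ℓ (π (ζ.eraseIdx j)) ≤ (ζ.eraseIdx j).length :=
                    cs.length_wordProd_le _
                  have h2 : (ζ.eraseIdx j).length + 1 = ζ.length :=
                    List.length_eraseIdx_add_one hj
                  have h3 : ζ.length = ℓ z0 := by rw [hζ]; exact hζred.symm ▸ rfl
                  omega
                have htK : t = π mb * s k * (π mb)⁻¹ := by
                  have : (π mb)⁻¹ * t * π mb = s k := hteq
                  rw [← this]; group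
                have hmemK : π mb * s k * (π mb)⁻¹ ∈ Subgroup.closure (cs.simple '' K) := by
                  refine mul_mem (mul_mem (wordProd_mem_closure cs hKb)
                    (Subgroup.subset_closure ⟨k, hkK, rfl⟩)) (inv_mem (wordProd_mem_closure cs hKb))
                have := hmin _ hmemK
                rw [← htK] at this
                omega
              · -- s k an inversion of π mb : shorter word, contradiction with hsh
                obtain ⟨j, hj, hgd⟩ := mem_ris_getD cs hin
                have herase : π mb * s k = π (mb.eraseIdx j) := by
                  rw [← hgd]
                  exact cs.wordProd_mul_getD_rightInvSeq mb j
                refine hsh ⟨mb.eraseIdx j, ?_, ?_, ?_⟩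
                · have := List.length_eraseIdx_add_one hj
                  simp only [List.length_append, List.length_singleton]
                  omega
                · exact fun b hb => hKb b (List.mem_of_mem_eraseIdx hb)
                · rw [← herase, hπ]
          have hlast : ℓ (π (mb ++ [k])) = ℓ (π mb) + 1 := by
            have hle : ℓ (π mb * s k) ≤ ℓ (π mb) + 1 := by
              have := cs.length_mul_le (π mb) (s k)
              rwa [cs.length_simple] at this
            by_contra hne
            have hlt : ℓ (π mb * s k) < ℓ (π mb) + 1 := by
              rw [hπ] at hne
              omega
            have : ℓ (z0 * (π mb * s k)) ≤ ℓ z0 + ℓ (π mb * s k) := cs.length_mul_le _ _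
            rw [← mul_assoc] at this
            omega
          rw [hπ] at hlast ⊢
          rw [← mul_assoc, hstep, hb]
          omega
  intro c hc
  obtain ⟨m, hm, rfl⟩ := exists_word_of_mem_closure cs hc
  exact main m.length m le_rfl hm


section Star

lemma star_ge_right (star : W → W → W)
    (hassoc : ∀ x y z : W, star (star x y) z = star x (star y z))
    (honeL : ∀ w : W, star 1 w = w)
    (hslt : ∀ (i : B) (w : W), ℓ (s i * w) < ℓ w → star (s i) w = w)
    (hsgt : ∀ (i : B) (w : W), ℓ w < ℓ (s i * w) → star (s i) w = s i * w) : ∀ (u v : W), ℓ v ≤ ℓ (star u v) := by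
  have main : ∀ n (u v : W), ℓ u ≤ n → ℓ v ≤ ℓ (star u v) := by
    intro n
    induction n with
    | zero =>
      intro u v hu
      have : u = 1 := cs.length_eq_zero_iff.mp (by omega)
      rw [this, honeL]
    | succ n ih =>
      intro u v hu
      by_cases h1 : u = 1
      · rw [h1, honeL]
      · obtain ⟨i, hi⟩ := cs.exists_leftDescent_of_ne_one h1
        have hi' : ℓ (s i * u) < ℓ u := hi
        set u₂ := s i * u with hu₂
        have hrec : u = s i * u₂ := by rw [hu₂, cs.simple_mul_simple_cancel_left]
        have hlen2 : ℓ (s i * u₂) = ℓ u := by rw [← hrec]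
        have hstar : star (s i) u₂ = u := by
          rw [hsgt i u₂ (by omega), ← hrec]
        have hW := ih u₂ v (by omega)
        calc ℓ v ≤ ℓ (star u₂ v) := hW
          _ ≤ ℓ (star u v) := by
            rw [← hstar, hassoc]
            rcases Nat.lt_trichotomy (ℓ (s i * star u₂ v)) (ℓ (star u₂ v)) with h | h | h
            · rw [hslt i _ h]
            · exact absurd h (cs.length_simple_mul_ne _ i)
            · rw [hsgt i _ h]
              omega
  intro u v
  exact main (ℓ u) u v le_rfl

lemma star_absorb_right (star : W → W → W)
    (hassoc : ∀ x y z : W, star (star x y) z = star x (star y z))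
    (honeR : ∀ w : W, star w 1 = w)
    (hsgt : ∀ (i : B) (w : W), ℓ w < ℓ (s i * w) → star (s i) w = s i * w)
    (hslt' : ∀ (i : B) (w : W), ℓ (w * s i) < ℓ w → star w (s i) = w)
    {K : Set B} {w : W} (hdesc : ∀ k ∈ K, ℓ (w * s k) < ℓ w) :
    ∀ c ∈ Subgroup.closure (cs.simple '' K), star w c = w := by
  have main : ∀ n (m : List B), m.length ≤ n → KWord K m → star w (π m) = w := by
    intro n
    induction n with
    | zero =>
      intro m hlen _
      have hm0 : m = [] := List.length_eq_zero_iff.mp (by omega)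
      subst hm0
      simpa using honeR w
    | succ n ih =>
      intro m hlen hK
      by_cases hsh : ∃ m', m'.length < m.length ∧ KWord K m' ∧ π m' = π m
      · obtain ⟨m', h1, h2, h3⟩ := hsh
        rw [← h3]
        exact ih m' (by omega) h2
      · rcases m with _ | ⟨k, m₂⟩
        · simpa using honeR w
        · have hkK : k ∈ K := hK k (by simp)
          have hK2 : KWord K m₂ := fun b hb => hK b (by simp [hb])
          set c₂ := π m₂ with hc₂
          have hgt : ℓ c₂ < ℓ (s k * c₂) := by
            rcases Nat.lt_trichotomy (ℓ (s k * c₂)) (ℓ c₂) with h | h | h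
            · exfalso
              -- shorter word contradiction
              have hlen' : ℓ (c₂⁻¹ * s k) < ℓ (c₂⁻¹) := by
                have h1 : (c₂⁻¹ * s k)⁻¹ = s k * c₂ := by
                  rw [mul_inv_rev, inv_inv, cs.inv_simple]
                have h2 : ℓ (c₂⁻¹ * s k) = ℓ (s k * c₂) := by
                  rw [← cs.length_inv, h1]
                rw [h2, cs.length_inv]
                exact h
              have hFB : FB cs c₂⁻¹ (s k) = true :=
                FB_of_lt cs (cs.isReflection_simple k) hlen'
              have hword : π m₂.reverse = c₂⁻¹ := by rw [cs.wordProd_reverse, hc₂]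
              have hmem := FB_mem cs hFB hword
              obtain ⟨j, hj, hgd⟩ := mem_ris_getD cs hmem
              have herase : c₂⁻¹ * s k = π (m₂.reverse.eraseIdx j) := by
                rw [← hgd, ← hword]
                exact cs.wordProd_mul_getD_rightInvSeq m₂.reverse j
              refine hsh ⟨(m₂.reverse.eraseIdx j).reverse, ?_, ?_, ?_⟩
              · rw [List.length_reverse]
                have h5 := List.length_eraseIdx_add_one hj
                have h6 : m₂.reverse.length = m₂.length := List.length_reverse
                simp only [List.length_cons]
                omega
              · intro b hb
                exact hK2 b (by
                  have := List.mem_of_mem_eraseIdx (List.mem_reverse.mp hb)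
                  exact List.mem_reverse.mp this)
              · rw [cs.wordProd_reverse, ← herase, cs.wordProd_cons]
                rw [mul_inv_rev, inv_inv, cs.inv_simple, ← hc₂]
            · exact absurd h (cs.length_simple_mul_ne c₂ k)
            · exact h
          have hstar : star (s k) c₂ = π (k :: m₂) := by
            rw [hsgt k c₂ hgt, cs.wordProd_cons]
          rw [← hstar, ← hassoc, hslt' k w (hdesc k hkK)]
          exact ih m₂ (by simp at hlen; omega) hK2
  intro c hc
  obtain ⟨m, hm, rfl⟩ := exists_word_of_mem_closure cs hc
  exact main m.length m le_rfl hm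

/-- Main right-handed lemma: if all of `K` are right descents of `z`, then every
"reflection of `W_K`" is a right inversion of `z`. -/
lemma main_right (star : W → W → W)
    (hassoc : ∀ x y z : W, star (star x y) z = star x (star y z))
    (honeL : ∀ w : W, star 1 w = w) (honeR : ∀ w : W, star w 1 = w)
    (hslt : ∀ (i : B) (w : W), ℓ (s i * w) < ℓ w → star (s i) w = w)
    (hsgt : ∀ (i : B) (w : W), ℓ w < ℓ (s i * w) → star (s i) w = s i * w)
    (hslt' : ∀ (i : B) (w : W), ℓ (w * s i) < ℓ w → star w (s i) = w)
    {K : Set B} {z : W} (hdesc : ∀ k ∈ K, ℓ (z * s k) < ℓ z) :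
    ∀ d ∈ Subgroup.closure (cs.simple '' K), ∀ k ∈ K, ℓ (z * (d * s k * d⁻¹)) < ℓ z := by
  set WKs := Subgroup.closure (cs.simple '' K) with hWKs
  have hPz : ∃ n, ∃ c ∈ WKs, ℓ (z * c) = n := ⟨ℓ z, 1, one_mem _, by simp⟩
  obtain ⟨c0, hc0, hc0len⟩ := Nat.find_spec hPz
  set z0 := z * c0 with hz0
  have hminn : ∀ c ∈ WKs, Nat.find hPz ≤ ℓ (z * c) := by
    intro c hc
    exact Nat.find_min' hPz ⟨c, hc, rfl⟩
  have hmin : ∀ c ∈ WKs, ℓ z0 ≤ ℓ (z0 * c) := by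
    intro c hc
    have h1 : z0 * c = z * (c0 * c) := by rw [hz0]; group
    rw [h1, hz0, hc0len]
    exact hminn _ (mul_mem hc0 hc)
  have hadd := coset_additivity cs (K := K) (z0 := z0) hmin
  have hzdec : z = z0 * c0⁻¹ := by rw [hz0]; group
  have hc0inv : c0⁻¹ ∈ WKs := inv_mem hc0
  set cst := c0⁻¹ with hcst
  have hlenz : ℓ z = ℓ z0 + ℓ cst := by
    rw [hzdec]
    exact hadd cst hc0inv
  have hcdesc : ∀ k ∈ K, ℓ (cst * s k) < ℓ cst := by
    intro k hk
    have hmemk : cst * s k ∈ WKs :=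
      mul_mem hc0inv (Subgroup.subset_closure ⟨k, hk, rfl⟩)
    have h1 : ℓ (z * s k) = ℓ z0 + ℓ (cst * s k) := by
      have : z * s k = z0 * (cst * s k) := by rw [hzdec]; group
      rw [this]
      exact hadd _ hmemk
    have h2 := hdesc k hk
    omega
  have hmax : ∀ u ∈ WKs, ℓ u ≤ ℓ cst := by
    intro u hu
    have h1 := star_absorb_right cs star hassoc honeR hsgt hslt' hcdesc u hu
    have h2 := star_ge_right cs star hassoc honeL hslt hsgt cst u
    rw [h1] at h2
    exact h2
  intro d hd k hk
  set τ := d * s k * d⁻¹ with hτ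
  have hτK : τ ∈ WKs :=
    mul_mem (mul_mem hd (Subgroup.subset_closure ⟨k, hk, rfl⟩)) (inv_mem hd)
  have hτrefl : cs.IsReflection τ := ⟨d, k, rfl⟩
  have hlt : ℓ (cst * τ) < ℓ cst := by
    have h1 : ℓ (cst * τ) ≤ ℓ cst := hmax _ (mul_mem hc0inv hτK)
    have h2 : ℓ (cst * τ) ≠ ℓ cst := hτrefl.length_mul_left_ne cst
    omega
  have h3 : ℓ (z * τ) = ℓ z0 + ℓ (cst * τ) := by
    have : z * τ = z0 * (cst * τ) := by rw [hzdec]; group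
    rw [this]
    exact hadd _ (mul_mem hc0inv hτK)
  rw [h3, hlenz]
  omega

end Star


end

end Stmt17Aux

open Stmt17Aux

/-- In the Hecke monoid `(W,*)` of a Coxeter system, if `I, J, K` are
finitary subsets of `S`, `x` is the longest element of its double coset `W_I x W_J` and
`y` is the longest element of its double coset `W_J y W_K`, then `x * y` is the longest
element of the double coset `W_I (x*y) W_K`. -/
theorem stmt17 {B W : Type} [Group W] {M : CoxeterMatrix B} (cs : CoxeterSystem M W)
    -- the Hecke monoid product on `W`
    (star : W → W → W)
    (hassoc : ∀ x y z : W, star (star x y) z = star x (star y z))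
    (honeL : ∀ w : W, star 1 w = w) (honeR : ∀ w : W, star w 1 = w)
    (hslt : ∀ (i : B) (w : W), cs.length (cs.simple i * w) < cs.length w →
      star (cs.simple i) w = w)
    (hsgt : ∀ (i : B) (w : W), cs.length w < cs.length (cs.simple i * w) →
      star (cs.simple i) w = cs.simple i * w)
    (hslt' : ∀ (i : B) (w : W), cs.length (w * cs.simple i) < cs.length w →
      star w (cs.simple i) = w)
    (hsgt' : ∀ (i : B) (w : W), cs.length w < cs.length (w * cs.simple i) →
      star w (cs.simple i) = w * cs.simple i)
    (I J K : Set B)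
    (WI WJ WK : Subgroup W)
    (hWI : WI = Subgroup.closure (cs.simple '' I))
    (hWJ : WJ = Subgroup.closure (cs.simple '' J))
    (hWK : WK = Subgroup.closure (cs.simple '' K))
    (hfinI : Set.Finite (WI : Set W)) (hfinJ : Set.Finite (WJ : Set W))
    (hfinK : Set.Finite (WK : Set W))
    (x y : W)
    (hx : ∀ u ∈ (WI : Set W) * {x} * (WJ : Set W), cs.length u ≤ cs.length x)
    (hy : ∀ u ∈ (WJ : Set W) * {y} * (WK : Set W), cs.length u ≤ cs.length y) :
    ∀ u ∈ (WI : Set W) * {star x y} * (WK : Set W), cs.length u ≤ cs.length (star x y) := by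
  classical
  set z := star x y with hz
  -- descents of x on the left
  have hdx : ∀ i ∈ I, cs.length (cs.simple i * x) < cs.length x := by
    intro i hi
    have hsi : cs.simple i ∈ (WI : Set W) := by
      rw [hWI]
      exact SetLike.mem_coe.mpr (Subgroup.subset_closure (Set.mem_image_of_mem _ hi))
    have hmem : cs.simple i * x ∈ (WI : Set W) * {x} * (WJ : Set W) := by
      have h1 : cs.simple i * x ∈ (WI : Set W) * {x} :=
        Set.mul_mem_mul hsi (Set.mem_singleton x)
      have h2 : (1 : W) ∈ (WJ : Set W) := SetLike.mem_coe.mpr (one_mem WJ)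
      simpa using Set.mul_mem_mul h1 h2
    exact lt_of_le_of_ne (hx _ hmem) (cs.length_simple_mul_ne x i)
  -- descents of y on the right
  have hdy : ∀ k ∈ K, cs.length (y * cs.simple k) < cs.length y := by
    intro k hk
    have hsk : cs.simple k ∈ (WK : Set W) := by
      rw [hWK]
      exact SetLike.mem_coe.mpr (Subgroup.subset_closure (Set.mem_image_of_mem _ hk))
    have hmem : y * cs.simple k ∈ (WJ : Set W) * {y} * (WK : Set W) := by
      have h1 : (1:W) * y ∈ (WJ : Set W) * {y} :=
        Set.mul_mem_mul (SetLike.mem_coe.mpr (one_mem WJ)) (Set.mem_singleton y)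
      have h2 := Set.mul_mem_mul h1 hsk
      simpa using h2
    exact lt_of_le_of_ne (hy _ hmem) (cs.length_mul_simple_ne y k)
  -- descents of z
  have hdzL : ∀ i ∈ I, cs.length (cs.simple i * z) < cs.length z := by
    intro i hi
    have habs : star (cs.simple i) z = z := by
      rw [hz, ← hassoc, hslt i x (hdx i hi)]
    rcases Nat.lt_trichotomy (cs.length (cs.simple i * z)) (cs.length z) with h | h | h
    · exact h
    · exact absurd h (cs.length_simple_mul_ne z i)
    · exfalso
      have h2 := hsgt i z h
      rw [habs] at h2
      have := congrArg cs.length h2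
      omega
  have hdzR : ∀ k ∈ K, cs.length (z * cs.simple k) < cs.length z := by
    intro k hk
    have habs : star z (cs.simple k) = z := by
      rw [hz, hassoc, hslt' k y (hdy k hk)]
    rcases Nat.lt_trichotomy (cs.length (z * cs.simple k)) (cs.length z) with h | h | h
    · exact h
    · exact absurd h (cs.length_mul_simple_ne z k)
    · exfalso
      have h2 := hsgt' k z h
      rw [habs] at h2
      have := congrArg cs.length h2
      omega
  have hdzinvL : ∀ i ∈ I, cs.length (z⁻¹ * cs.simple i) < cs.length z⁻¹ := by
    intro i hi
    have h1 : (z⁻¹ * cs.simple i)⁻¹ = cs.simple i * z := by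
      rw [mul_inv_rev, inv_inv, cs.inv_simple]
    have h2 : cs.length (z⁻¹ * cs.simple i) = cs.length (cs.simple i * z) := by
      rw [← cs.length_inv, h1]
    rw [h2, cs.length_inv]
    exact hdzL i hi
  -- the two main inversion statements
  have R1 := main_right cs star hassoc honeL honeR hslt hsgt hslt' (K := K) (z := z) hdzR
  have R2 := main_right cs star hassoc honeL honeR hslt hsgt hslt' (K := I) (z := z⁻¹) hdzinvL
  -- unpack u
  intro u hu
  obtain ⟨v, hv, c, hc, rfl⟩ := hu
  obtain ⟨a, ha, z', hz', rfl⟩ := hv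
  rw [Set.mem_singleton_iff] at hz'
  subst hz'
  have haI : a ∈ Subgroup.closure (cs.simple '' I) := by
    rw [← hWI]; exact ha
  have hcK : c ∈ Subgroup.closure (cs.simple '' K) := by
    rw [← hWK]; exact hc
  -- counting
  obtain ⟨Φu, hΦucard, hΦumem⟩ := exists_flip_finset cs (a * z * c)
  obtain ⟨Φz, hΦzcard, hΦzmem⟩ := exists_flip_finset cs z
  have key : ∀ t ∈ Φu, c * t * c⁻¹ ∈ Φz := by
    intro t ht
    have hFBu : FB cs (a * z * c) t = true := (hΦumem t).mp ht
    rw [hΦzmem]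
    by_contra hzf
    rw [Bool.not_eq_true] at hzf
    have hFc : FB cs c t = false := by
      by_contra hFc
      rw [Bool.not_eq_false] at hFc
      obtain ⟨mc, hmc, hmcp⟩ := exists_word_of_mem_closure cs hcK
      have hmemt := FB_mem cs hFc hmcp
      obtain ⟨d, hd, k, hk, rfl⟩ := ris_KWord_refl cs hmc hmemt
      have hform : c * (d * cs.simple k * d⁻¹) * c⁻¹
          = (c*d) * cs.simple k * (c*d)⁻¹ := by group
      have hltz : cs.length (z * (c * (d * cs.simple k * d⁻¹) * c⁻¹)) < cs.length z := by
        rw [hform]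
        exact R1 (c*d) (mul_mem hcK hd) k hk
      have hFz : FB cs z (c * (d * cs.simple k * d⁻¹) * c⁻¹) = true :=
        FB_of_lt cs (hform ▸ ⟨c*d, k, rfl⟩) hltz
      rw [hzf] at hFz
      exact Bool.false_ne_true hFz
    have hdecomp := FB_mul cs (a*z) c t
    rw [hFBu, hFc] at hdecomp
    have hFaz : FB cs (a*z) (c * t * c⁻¹) = true := by
      simpa using hdecomp.symm
    have hdecomp2 := FB_mul cs a z (c*t*c⁻¹)
    rw [hFaz, hzf] at hdecomp2
    have hFa : FB cs a (z * (c*t*c⁻¹) * z⁻¹) = true := by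
      simpa using hdecomp2.symm
    obtain ⟨ma, hma, hmap⟩ := exists_word_of_mem_closure cs haI
    have hmem2 := FB_mem cs hFa hmap
    obtain ⟨e, he, i, hi, heq⟩ := ris_KWord_refl cs hma hmem2
    -- heq : z * (c*t*c⁻¹) * z⁻¹ = e * s i * e⁻¹
    have ht' : c * t * c⁻¹ = z⁻¹ * (e * cs.simple i * e⁻¹) * z := by
      rw [← heq]; group
    have ht'refl : cs.IsReflection (c * t * c⁻¹) := by
      rw [ht']
      have : z⁻¹ * (e * cs.simple i * e⁻¹) * z
          = (z⁻¹ * e) * cs.simple i * (z⁻¹ * e)⁻¹ := by group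
      rw [this]
      exact ⟨z⁻¹ * e, i, rfl⟩
    have hltz : cs.length (z * (c * t * c⁻¹)) < cs.length z := by
      have h1 : z * (c * t * c⁻¹) = (e * cs.simple i * e⁻¹) * z := by
        rw [ht']; group
      have hrefl : cs.IsReflection (e * cs.simple i * e⁻¹) := ⟨e, i, rfl⟩
      have h2 : cs.length ((e * cs.simple i * e⁻¹) * z)
          = cs.length (z⁻¹ * (e * cs.simple i * e⁻¹)) := by
        rw [← cs.length_inv, mul_inv_rev, hrefl.inv]
      rw [h1, h2, ← cs.length_inv z]
      exact R2 e he i hi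
    have hFz := FB_of_lt cs ht'refl hltz
    rw [hzf] at hFz
    exact Bool.false_ne_true hFz
  have hinj : Function.Injective (fun t : W => c * t * c⁻¹) := by
    intro t1 t2 h12
    simp only at h12
    have := congrArg (fun w => c⁻¹ * w * c) h12
    simpa [mul_assoc] using this
  calc cs.length (a * z * c) = Φu.card := hΦucard.symm
    _ = (Φu.image (fun t => c * t * c⁻¹)).card :=
        (Finset.card_image_of_injective Φu hinj).symm
    _ ≤ Φz.card := by
        apply Finset.card_le_card
        intro t' ht'
        obtain ⟨t, ht, rfl⟩ := Finset.mem_image.mp ht'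
        exact key t ht
    _ = cs.length z := hΦzcard
end
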